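/- arXiv:2112.03082 — 9 statements merged into one kernel-verified Lean document; each statement's English description precedes it below -/
import Mathlib

section
/- Shrinking common-deadline instances from one side (Lemma 'ShrinkfromOneSide'): Let J be a speed-scaling instance in which all n jobs share a common deadline d, so job i has interval [r_i, d) and workload w_i. Let c ∈ (0,1] and, for each i, let c_i ∈ ℝ with c ≤ c_i ≤ 1, and let Ĵ be the instance in which job i has the same workload w_i, the same deadline d, and release time r̂_i = r_i + (1 − c_i)·(d − r_i). Then OPT(Ĵ) ≤ (1/c)^(α−1) · OPT(J). -/
open MeasureTheory
open scoped ENNReal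

/-- The discrete σ-algebra on `Option ι` (the job assignment takes values in a
countable/finite set of jobs plus "idle"). -/
instance optionMeasurableSpace {ι : Type*} : MeasurableSpace (Option ι) := ⊤

/-- A speed-scaling instance: each job `i` has release time `r i`, deadline `d i`
and workload `w i`. -/
structure SSInstance (ι : Type*) where
  r : ι → ℝ
  d : ι → ℝ
  w : ι → ℝ

/-- A schedule `(s, σ)` (measurable speed function together with a measurable job
assignment) is feasible for the instance `J`: each job is only executed inside its
interval `[r i, d i)` and its whole workload is processed. -/
def SSFeasible {ι : Type*} (J : SSInstance ι) (s : ℝ → ℝ) (σ : ℝ → Option ι) : Prop :=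
  Measurable s ∧ Measurable σ ∧ (∀ t, 0 ≤ s t) ∧
    ∀ i : ι, {t | σ t = some i} ⊆ Set.Ico (J.r i) (J.d i) ∧
      J.w i ≤ ∫ t in {t | σ t = some i}, s t

/-- Energy consumption `∫ s(t)^α dt` of a speed function. -/
noncomputable def SSEnergy (α : ℝ) (s : ℝ → ℝ) : ℝ≥0∞ :=
  ∫⁻ t, ENNReal.ofReal (s t ^ α)

/-- `OPT(J)`: the infimum of the energies of feasible schedules for instance `J`. -/
noncomputable def SSOpt (α : ℝ) {ι : Type*} (J : SSInstance ι) : ℝ≥0∞ :=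
  sInf {E | ∃ s σ, SSFeasible J s σ ∧ E = SSEnergy α s}

/-- **Lemma `ShrinkfromOneSide`.** Shrinking a common-deadline instance from one side:
if every job's release time is moved from `r i` to `r i + (1 - c i) * (d - r i)` with
`c ≤ c i ≤ 1`, the optimal energy increases by a factor of at most `(1/c)^(α-1)`. -/
theorem shrink_from_one_side (α : ℝ) (hα : 1 < α) (n : ℕ)
    (r w : Fin n → ℝ) (d : ℝ) (c : ℝ) (ci : Fin n → ℝ)
    (hrd : ∀ i, r i < d) (hw : ∀ i, 0 ≤ w i)
    (hc0 : 0 < c) (hc1 : c ≤ 1) (hci : ∀ i, c ≤ ci i ∧ ci i ≤ 1) :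
    SSOpt α (⟨fun i => r i + (1 - ci i) * (d - r i), fun _ => d, w⟩ : SSInstance (Fin n))
      ≤ ENNReal.ofReal ((1 / c) ^ (α - 1)) *
        SSOpt α (⟨r, fun _ => d, w⟩ : SSInstance (Fin n)) := by
  
  set K : ℝ≥0∞ := ENNReal.ofReal ((1 / c) ^ (α - 1)) with hK
  have hKpos : K ≠ 0 := by
    simp only [hK, ne_eq, ENNReal.ofReal_eq_zero, not_le]
    exact Real.rpow_pos_of_pos (by positivity) _
  have hKtop : K ≠ ⊤ := ENNReal.ofReal_ne_top
  have hrpow : Measurable fun x : ℝ => x ^ α := by measurability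
  have key : ∀ E ∈ {E | ∃ s σ, SSFeasible (⟨r, fun _ => d, w⟩ : SSInstance (Fin n)) s σ
      ∧ E = SSEnergy α s},
      SSOpt α (⟨fun i => r i + (1 - ci i) * (d - r i), fun _ => d, w⟩ : SSInstance (Fin n))
        ≤ K * E := by
    rintro E ⟨s, σ, ⟨hs, hσ, hs0, hfeas⟩, rfl⟩
    set g : ℝ → ℝ := fun u => c⁻¹ * u + (d - c⁻¹ * d) with hgdef
    have hg : Measurable g := (measurable_id.const_mul _).add_const _
    have hmap : Measure.map g volume = ENNReal.ofReal c • volume := by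
      have h1 : g = (fun x => x + (d - c⁻¹ * d)) ∘ (fun u => c⁻¹ * u) := rfl
      rw [h1, ← Measure.map_map (measurable_add_const _) (measurable_const_mul _),
        Real.map_volume_mul_left (inv_ne_zero hc0.ne'), Measure.map_smul,
        map_add_right_eq_self, inv_inv, abs_of_pos hc0]
    set s' : ℝ → ℝ := fun u => c⁻¹ * s (g u) with hs'def
    set σ' : ℝ → Option (Fin n) := fun u => σ (g u) with hσ'def
    have hfeas' : SSFeasible
        (⟨fun i => r i + (1 - ci i) * (d - r i), fun _ => d, w⟩ : SSInstance (Fin n)) s' σ' := by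
      refine ⟨(hs.comp hg).const_mul _, hσ.comp hg,
        fun t => mul_nonneg (by positivity) (hs0 _), fun i => ?_⟩
      have hset : {u | σ' u = some i} = g ⁻¹' {t | σ t = some i} := rfl
      constructor
      · intro u hu
        have h2 : g u ∈ Set.Ico (r i) d := (hfeas i).1 hu
        obtain ⟨h3, h4⟩ := h2
        simp only [hgdef] at h3 h4
        obtain ⟨hci1, hci2⟩ := hci i
        have hri := hrd i
        have h3' : c * (r i - d) ≤ u - d := by
          have h5 : c * (r i - d) ≤ c * (c⁻¹ * (u - d)) := by
            have := mul_le_mul_of_nonneg_left (sub_le_sub_right h3 d) hc0.le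
            calc c * (r i - d) ≤ c * (c⁻¹ * u + (d - c⁻¹ * d) - d) := this
              _ = c * (c⁻¹ * (u - d)) := by ring
          calc c * (r i - d) ≤ c * (c⁻¹ * (u - d)) := h5
            _ = u - d := by field_simp
        have h4' : u < d := by
          by_contra hcon
          push_neg at hcon
          have h6 : 0 ≤ c⁻¹ * (u - d) := mul_nonneg (by positivity) (by linarith)
          have h7 : c⁻¹ * u + (d - c⁻¹ * d) - d < 0 := by linarith
          nlinarith
        have hcmul : c * (d - r i) ≤ ci i * (d - r i) :=
          mul_le_mul_of_nonneg_right hci1 (by linarith)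
        exact ⟨by simp only; nlinarith, h4'⟩
      · have hA : MeasurableSet {t | σ t = some i} :=
          hσ (show MeasurableSet {o : Option (Fin n) | o = some i} from trivial)
        have hwork := (hfeas i).2
        have hcov : ∫ u in {u | σ' u = some i}, s' u = ∫ t in {t | σ t = some i}, s t := by
          rw [hset, ← integral_indicator (hg hA)]
          have hind : ∀ u, (g ⁻¹' {t | σ t = some i}).indicator s' u
              = ({t | σ t = some i}).indicator (fun t => c⁻¹ * s t) (g u) := by
            intro u
            by_cases h : g u ∈ {t | σ t = some i}
            · rw [Set.indicator_of_mem (Set.mem_preimage.2 h), Set.indicator_of_mem h]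
            · rw [Set.indicator_of_notMem (fun hh => h (Set.mem_preimage.1 hh)),
                Set.indicator_of_notMem h]
          simp_rw [hind]
          have hmeasf : AEStronglyMeasurable
              (({t | σ t = some i}).indicator (fun t => c⁻¹ * s t))
              (Measure.map g volume) :=
            ((hs.const_mul _).indicator hA).aestronglyMeasurable
          rw [← integral_map hg.aemeasurable hmeasf, hmap, integral_smul_measure,
            integral_indicator hA, ENNReal.toReal_ofReal hc0.le, smul_eq_mul,
            integral_const_mul, ← mul_assoc, mul_inv_cancel₀ hc0.ne', one_mul]
        rw [hcov]; exact hwork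
    have henergy : SSEnergy α s' = K * SSEnergy α s := by
      have hrw : ∀ u, ENNReal.ofReal (s' u ^ α)
          = ENNReal.ofReal (c⁻¹ ^ α) * ENNReal.ofReal (s (g u) ^ α) := by
        intro u
        rw [hs'def]
        simp only
        rw [Real.mul_rpow (by positivity) (hs0 _), ENNReal.ofReal_mul (by positivity)]
      have hmeas2 : Measurable fun t : ℝ => ENNReal.ofReal (s t ^ α) :=
        (hrpow.comp hs).ennreal_ofReal
      have hconst : (1 / c : ℝ) ^ (α - 1) = c⁻¹ ^ α * c := by
        rw [one_div, Real.rpow_sub (by positivity), Real.rpow_one, div_inv_eq_mul]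
      calc SSEnergy α s' = ∫⁻ u, ENNReal.ofReal (c⁻¹ ^ α)
            * ENNReal.ofReal (s (g u) ^ α) := by
            unfold SSEnergy; simp_rw [hrw]
        _ = ENNReal.ofReal (c⁻¹ ^ α) * ∫⁻ u, ENNReal.ofReal (s (g u) ^ α) :=
            lintegral_const_mul _ (hmeas2.comp hg)
        _ = ENNReal.ofReal (c⁻¹ ^ α) * (ENNReal.ofReal c * ∫⁻ t, ENNReal.ofReal (s t ^ α)) := by
            rw [← lintegral_map hmeas2 hg, hmap, lintegral_smul_measure, smul_eq_mul]
        _ = K * SSEnergy α s := by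
            rw [SSEnergy, ← mul_assoc, ← ENNReal.ofReal_mul (by positivity), hK, hconst]
    calc SSOpt α _ ≤ SSEnergy α s' := sInf_le ⟨s', σ', hfeas', rfl⟩
      _ = K * SSEnergy α s := henergy
  conv_rhs => rw [SSOpt, sInf_eq_iInf']
  rw [ENNReal.mul_iInf_of_ne hKpos hKtop]
  exact le_iInf fun E => key E E.2
end

section
/- Symmetric shrinking of job intervals (Lemma 'ShrinkingRatio'): Let J be a speed-scaling instance with jobs having intervals [r_i, d_i) and workloads w_i, let c ∈ (0,1], and let Ĵ be the instance in which job i has the same workload w_i, release time r̂_i = r_i + ((1 − c)/2)·(d_i − r_i), and deadline d̂_i = d_i − ((1 − c)/2)·(d_i − r_i). Then OPT(Ĵ) ≤ (1/c)^(α−1) · OPT(J). -/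
open MeasureTheory
open scoped ENNReal

section ShrinkingRatioAux

open Set

/-- IVT for prefix measures: find a prefix of `Ico a a'` of prescribed measure. -/
lemma exists_prefix_measure (m : Measure ℝ) [NullSingletonClass m] (a a' : ℝ)
    (hfin : m (Set.Ico a a') ≠ ⊤) {b : ℝ≥0∞} (hb : b ≤ m (Set.Ico a a')) :
    ∃ τ, m (Set.Ico a a' ∩ Set.Iio τ) = b := by
  by_cases hb0 : b = 0
  · refine ⟨a, ?_⟩
    have hemp : Set.Ico a a' ∩ Set.Iio a = ∅ := by
      apply Set.eq_empty_iff_forall_notMem.2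
      rintro x ⟨hx1, hx2⟩
      exact absurd hx2 (not_lt.2 hx1.1)
    rw [hemp, hb0, measure_empty]
  set f : ℝ → ℝ≥0∞ := fun t => m (Set.Ico a a' ∩ Set.Iio t) with hf
  have hmono : Monotone f := fun t₁ t₂ h =>
    measure_mono (Set.inter_subset_inter_right _ (Set.Iio_subset_Iio h))
  set E : Set ℝ := {t | b ≤ f t} with hE
  have hvE : a' ∈ E := by
    have : Set.Ico a a' ∩ Set.Iio a' = Set.Ico a a' := by
      apply Set.inter_eq_left.2; exact fun x hx => hx.2
    simpa [hE, f, this] using hb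
  have hEne : E.Nonempty := ⟨a', hvE⟩
  have hbdd : BddBelow E := by
    refine ⟨a, fun t ht => ?_⟩
    by_contra hta
    push_neg at hta
    have hemp : Set.Ico a a' ∩ Set.Iio t = ∅ := by
      apply Set.eq_empty_iff_forall_notMem.2
      rintro x ⟨hx1, hx2⟩
      exact absurd hx2 (not_lt.2 (le_trans (le_of_lt hta) hx1.1))
    have : f t = 0 := by show m (Set.Ico a a' ∩ Set.Iio t) = 0; rw [hemp, measure_empty]
    rw [hE] at ht
    exact hb0 (le_antisymm (le_trans ht this.le) (zero_le))
  set τ := sInf E with hτ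
  refine ⟨τ, le_antisymm ?_ ?_⟩
  · -- f τ ≤ b
    have key : ∀ k : ℕ, f (τ - 1/(k+1)) ≤ b := by
      intro k
      have hlt : τ - 1/(k+1) < τ := by
        have : (0:ℝ) < 1/(k+1) := by positivity
        linarith
      have : τ - 1/(k+1) ∉ E := fun hmem => absurd (csInf_le hbdd hmem) (not_le.2 hlt)
      rw [hE, Set.mem_setOf_eq, not_le] at this
      exact this.le
    have hunion : Set.Ico a a' ∩ Set.Iio τ = ⋃ k : ℕ, Set.Ico a a' ∩ Set.Iio (τ - 1/(k+1)) := by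
      ext x
      simp only [Set.mem_inter_iff, Set.mem_iUnion, Set.mem_Iio]
      constructor
      · rintro ⟨hx, hxt⟩
        obtain ⟨k, hk⟩ := exists_nat_one_div_lt (show 0 < τ - x by linarith)
        exact ⟨k, hx, by linarith⟩
      · rintro ⟨k, hx, hxk⟩
        have : (0:ℝ) < 1/(k+1) := by positivity
        exact ⟨hx, by linarith⟩
    have hdir : Directed (· ⊆ ·) (fun k : ℕ => Set.Ico a a' ∩ Set.Iio (τ - 1/(k+1))) := by
      apply Monotone.directed_le
      intro k₁ k₂ hk
      apply Set.inter_subset_inter_right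
      apply Set.Iio_subset_Iio
      have h1 : (1:ℝ)/(k₂+1) ≤ 1/(k₁+1) := by
        apply one_div_le_one_div_of_le (by positivity)
        exact_mod_cast by exact_mod_cast add_le_add_left (Nat.cast_le.2 hk) 1
      linarith
    rw [hunion, hdir.measure_iUnion]
    exact iSup_le key
  · -- b ≤ f τ
    have key : ∀ k : ℕ, b ≤ f (τ + 1/(k+1)) := by
      intro k
      have : (0:ℝ) < 1/(k+1) := by positivity
      obtain ⟨t, htE, htlt⟩ := exists_lt_of_csInf_lt hEne (show τ < τ + 1/(k+1) by linarith)
      exact le_trans htE (hmono htlt.le)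
    have hIic : b ≤ m (Set.Ico a a' ∩ Set.Iic τ) := by
      have hinter : Set.Ico a a' ∩ Set.Iic τ = ⋂ k : ℕ, Set.Ico a a' ∩ Set.Iio (τ + 1/(k+1)) := by
        ext x
        simp only [Set.mem_inter_iff, Set.mem_iInter, Set.mem_Iio, Set.mem_Iic]
        constructor
        · rintro ⟨hx, hxt⟩ k
          have : (0:ℝ) < 1/(k+1) := by positivity
          exact ⟨hx, by linarith⟩
        · intro h
          refine ⟨(h 0).1, ?_⟩
          by_contra hxt
          push_neg at hxt
          obtain ⟨k, hk⟩ := exists_nat_one_div_lt (show 0 < x - τ by linarith)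
          exact absurd (h k).2 (not_lt.2 (by linarith))
      have hdir : Directed (· ⊇ ·) (fun k : ℕ => Set.Ico a a' ∩ Set.Iio (τ + 1/(k+1))) := by
        apply Antitone.directed_ge
        intro k₁ k₂ hk
        apply Set.inter_subset_inter_right
        apply Set.Iio_subset_Iio
        have h1 : (1:ℝ)/(k₂+1) ≤ 1/(k₁+1) := by
          apply one_div_le_one_div_of_le (by positivity)
          exact_mod_cast add_le_add_left (Nat.cast_le.2 hk) 1
        linarith
      rw [hinter, Directed.measure_iInter (fun k => (measurableSet_Ico.inter measurableSet_Iio).nullMeasurableSet) hdir ⟨0, ne_top_of_le_ne_top hfin (measure_mono Set.inter_subset_left)⟩]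
      exact le_iInf key
    calc b ≤ m (Set.Ico a a' ∩ Set.Iic τ) := hIic
    _ ≤ m ((Set.Ico a a' ∩ Set.Iio τ) ∪ {τ}) := by
        apply measure_mono
        rintro x ⟨hx, hxt⟩
        rcases lt_or_eq_of_le (Set.mem_Iic.1 hxt) with h | h
        · exact Or.inl ⟨hx, h⟩
        · exact Or.inr (by simp [h])
    _ ≤ m (Set.Ico a a' ∩ Set.Iio τ) + m {τ} := measure_union_le _ _
    _ = f τ := by rw [measure_singleton, add_zero]

/-- Hall-type allocation on the real line with interval windows. -/
lemma hallAlloc {ι : Type*} [DecidableEq ι] (u v : ι → ℝ) (b : ι → ℝ≥0∞)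
    (S : Finset ι) :
    ∀ (m : Measure ℝ), NullSingletonClass m →
      (∀ i ∈ S, m (Set.Ico (u i) (v i)) ≠ ⊤) →
      (∀ T ⊆ S, (∑ i ∈ T, b i) ≤ m (⋃ i ∈ T, Set.Ico (u i) (v i))) →
      ∃ B : ι → Set ℝ, (∀ i, MeasurableSet (B i)) ∧
        (∀ i ∈ S, B i ⊆ Set.Ico (u i) (v i)) ∧
        ((S : Set ι).Pairwise (Function.onFun Disjoint B)) ∧
        (∀ i ∈ S, b i ≤ m (B i)) := by
  induction S using Finset.strongInduction with
  | _ S IH =>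
    intro m hatoms hfin hHall
    haveI := hatoms
    rcases S.eq_empty_or_nonempty with rfl | hSne
    · exact ⟨fun _ => ∅, fun _ => MeasurableSet.empty, fun i hi => absurd hi (by simp),
        by simp, fun i hi => absurd hi (by simp)⟩
    obtain ⟨i₀, hi₀, hmin⟩ := S.exists_min_image v hSne
    set W : ι → Set ℝ := fun i => Set.Ico (u i) (v i) with hW
    have hWm : ∀ i, MeasurableSet (W i) := fun i => measurableSet_Ico
    have hb₀ : b i₀ ≤ m (W i₀) := by
      have := hHall {i₀} (Finset.singleton_subset_iff.2 hi₀)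
      simpa using this
    obtain ⟨τ, hτ⟩ := exists_prefix_measure m (u i₀) (v i₀) (hfin i₀ hi₀) hb₀
    set B₀ : Set ℝ := Set.Ico (u i₀) (v i₀) ∩ Set.Iio τ with hB₀
    have hB₀m : MeasurableSet B₀ := measurableSet_Ico.inter measurableSet_Iio
    have hB₀sub : B₀ ⊆ W i₀ := Set.inter_subset_left
    have hmB₀ : m B₀ = b i₀ := hτ
    have hb₀top : b i₀ ≠ ⊤ := ne_top_of_le_ne_top (hfin i₀ hi₀) hb₀
    set m' := m.restrict B₀ᶜ with hm'
    have hm'le : ∀ s, m' s ≤ m s := fun s => Measure.restrict_le_self s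
    set S' := S.erase i₀ with hS'
    have hssub : S' ⊂ S := Finset.erase_ssubset hi₀
    have hfin' : ∀ i ∈ S', m' (W i) ≠ ⊤ := fun i hi =>
      ne_top_of_le_ne_top (hfin i (Finset.mem_of_mem_erase hi)) (hm'le _)
    have hHall' : ∀ T ⊆ S', (∑ i ∈ T, b i) ≤ m' (⋃ i ∈ T, W i) := by
      intro T hT
      rcases T.eq_empty_or_nonempty with rfl | hTne
      · simp
      obtain ⟨j₁, hj₁, hminU⟩ := T.exists_min_image u hTne
      set U := u j₁ with hU
      set Tset := ⋃ i ∈ T, W i with hTset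
      have hTsetm : MeasurableSet Tset :=
        MeasurableSet.biUnion T.countable_toSet (fun i _ => hWm i)
      have hTS : T ⊆ S := hT.trans (Finset.erase_subset _ _)
      have hi₀T : i₀ ∉ T := fun h => (Finset.notMem_erase i₀ S) (hT h)
      have key1 : W i₀ ∩ Tset = W i₀ ∩ Set.Ici U := by
        ext x
        constructor
        · rintro ⟨hx0, hxT⟩
          simp only [hTset, Set.mem_iUnion] at hxT
          obtain ⟨i, hiT, hxi⟩ := hxT
          exact ⟨hx0, le_trans (hminU i hiT) hxi.1⟩
        · rintro ⟨hx0, hxU⟩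
          refine ⟨hx0, ?_⟩
          simp only [hTset, Set.mem_iUnion]
          exact ⟨j₁, hj₁, hxU, lt_of_lt_of_le hx0.2 (hmin j₁ (hTS hj₁))⟩
      set P : Set ℝ := W i₀ ∩ Set.Iio U with hP
      have hPm : MeasurableSet P := (hWm i₀).inter measurableSet_Iio
      have hPfin : m P ≠ ⊤ :=
        ne_top_of_le_ne_top (hfin i₀ hi₀) (measure_mono Set.inter_subset_left)
      have hWdiff : W i₀ \ Tset = P := by
        ext x
        constructor
        · rintro ⟨hx0, hxT⟩
          rcases lt_or_ge x U with h | h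
          · exact ⟨hx0, h⟩
          · exact absurd (key1 ▸ (⟨hx0, h⟩ : x ∈ W i₀ ∩ Set.Ici U) : x ∈ W i₀ ∩ Tset).2 hxT
        · rintro ⟨hx0, hxU⟩
          refine ⟨hx0, fun hxT => ?_⟩
          have : x ∈ W i₀ ∩ Set.Ici U := key1 ▸ ⟨hx0, hxT⟩
          exact absurd (Set.mem_Ici.1 this.2) (not_le.2 hxU)
      have hPT : P ∩ Tset = ∅ := by
        apply Set.eq_empty_iff_forall_notMem.2
        rintro x ⟨hxP, hxT⟩
        have : x ∈ W i₀ ∩ Set.Ici U := key1 ▸ ⟨hxP.1, hxT⟩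
        exact absurd (Set.mem_Ici.1 this.2) (not_le.2 hxP.2)
      have hHallT : b i₀ + ∑ i ∈ T, b i ≤ m Tset + m P := by
        have hins : insert i₀ T ⊆ S := Finset.insert_subset hi₀ hTS
        have h1 := hHall (insert i₀ T) hins
        rw [Finset.sum_insert hi₀T] at h1
        have h2 : (⋃ i ∈ insert i₀ T, W i) = W i₀ ∪ Tset := by
          rw [Finset.set_biUnion_insert]
        rw [h2] at h1
        have h3 : W i₀ ∪ Tset = Tset ∪ P := by
          rw [Set.union_comm]
          ext x
          constructor
          · rintro (hx | hx)
            · exact Or.inl hx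
            · rcases Classical.em (x ∈ Tset) with h | h
              · exact Or.inl h
              · exact Or.inr (hWdiff ▸ ⟨hx, h⟩)
          · rintro (hx | hx)
            · exact Or.inl hx
            · exact Or.inr hx.1
        have h4 : m (Tset ∪ P) = m Tset + m P := by
          apply measure_union _ hPm
          apply Set.disjoint_left.2
          intro x hxT hxP
          exact absurd (Set.eq_empty_iff_forall_notMem.1 hPT x) (fun h => h ⟨hxP, hxT⟩)
        rw [h3, h4] at h1
        exact h1
      have hrestr : m' Tset = m (Tset \ B₀) := by
        rw [hm', Measure.restrict_apply hTsetm, Set.diff_eq]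
      by_cases hcase : m P ≤ b i₀
      · -- leftmost prefix covers P
        have hPB : m (P \ B₀) = 0 := by
          by_cases hUτ : U ≤ τ
          · have : P ⊆ B₀ := fun x hx => ⟨hx.1, lt_of_lt_of_le hx.2 hUτ⟩
            rw [Set.diff_eq_empty.2 this, measure_empty]
          · push_neg at hUτ
            have hBP : B₀ ⊆ P := fun x hx => ⟨hx.1, lt_of_lt_of_le hx.2 hUτ.le⟩
            have hsplit : m (P ∩ B₀) + m (P \ B₀) = m P := measure_inter_add_diff (μ := m) P hB₀m
            rw [Set.inter_eq_right.2 hBP, hmB₀] at hsplit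
            have : b i₀ + m (P \ B₀) ≤ b i₀ + 0 := by
              rw [add_zero]
              exact hsplit.le.trans hcase
            exact le_antisymm (ENNReal.le_of_add_le_add_left hb₀top this) (zero_le)
        have hmPB : m (P ∩ B₀) = m P := by
          have := measure_inter_add_diff (μ := m) P hB₀m
          rw [hPB, add_zero] at this
          exact this
        have hBTP : m P ≤ m (B₀ \ Tset) := by
          rw [← hmPB]
          apply measure_mono
          rintro x ⟨hxP, hxB⟩
          exact ⟨hxB, fun hxT => absurd (Set.eq_empty_iff_forall_notMem.1 hPT x)
            (fun h => h ⟨hxP, hxT⟩)⟩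
        have hsplitT : m (Tset ∩ B₀) + m (Tset \ B₀) = m Tset :=
          measure_inter_add_diff (μ := m) Tset hB₀m
        have hsplitB : m (B₀ ∩ Tset) + m (B₀ \ Tset) = m B₀ :=
          measure_inter_add_diff (μ := m) B₀ hTsetm
        have hxfin : m (Tset ∩ B₀) + m P ≠ ⊤ := by
          apply ENNReal.add_ne_top.2
          exact ⟨ne_top_of_le_ne_top hb₀top (by rw [← hmB₀]; exact measure_mono Set.inter_subset_right), hPfin⟩
        have hkey : (m (Tset ∩ B₀) + m P) + ∑ i ∈ T, b i
            ≤ (m (Tset ∩ B₀) + m P) + m (Tset \ B₀) := by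
          have e1 : m (Tset ∩ B₀) + m P ≤ b i₀ := by
            rw [← hmB₀, ← hsplitB, Set.inter_comm]
            exact add_le_add le_rfl hBTP
          calc (m (Tset ∩ B₀) + m P) + ∑ i ∈ T, b i
              ≤ b i₀ + ∑ i ∈ T, b i := add_le_add e1 le_rfl
            _ ≤ m Tset + m P := hHallT
            _ = (m (Tset ∩ B₀) + m (Tset \ B₀)) + m P := by rw [hsplitT]
            _ = (m (Tset ∩ B₀) + m P) + m (Tset \ B₀) := by ring
        rw [hrestr]
        exact ENNReal.le_of_add_le_add_left hxfin hkey
      · -- B₀ does not touch Tset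
        push_neg at hcase
        have hτU : τ < U := by
          by_contra h
          push_neg at h
          have : P ⊆ B₀ := fun x hx => ⟨hx.1, lt_of_lt_of_le hx.2 h⟩
          exact absurd (le_trans (measure_mono this) hmB₀.le) (not_le.2 hcase)
        have hBT : Tset \ B₀ = Tset := by
          ext x
          constructor
          · exact fun h => h.1
          · intro hxT
            refine ⟨hxT, fun hxB => ?_⟩
            have hx1 : x ∈ W i₀ ∩ Set.Ici U := key1 ▸ ⟨hxB.1, hxT⟩
            exact absurd (lt_of_lt_of_le hxB.2 hτU.le) (not_lt.2 (Set.mem_Ici.1 hx1.2))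
        rw [hrestr, hBT]
        exact hHall T hTS
    obtain ⟨B', hB'm, hB'sub, hB'disj, hB'ge⟩ :=
      IH S' hssub m' (by infer_instance) hfin' hHall'
    classical
    set Bf : ι → Set ℝ := fun i => if i = i₀ then B₀ else B' i \ B₀ with hBf
    have hBf₀ : Bf i₀ = B₀ := if_pos rfl
    have hBfne : ∀ i, i ≠ i₀ → Bf i = B' i \ B₀ := fun i h => if_neg h
    have hmemS' : ∀ i, i ∈ S → i ≠ i₀ → i ∈ S' := fun i hi h =>
      Finset.mem_erase.2 ⟨h, hi⟩
    refine ⟨Bf, ?_, ?_, ?_, ?_⟩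
    · intro i
      by_cases h : i = i₀
      · rw [h, hBf₀]; exact hB₀m
      · rw [hBfne i h]; exact (hB'm i).diff hB₀m
    · intro i hi
      by_cases h : i = i₀
      · rw [h, hBf₀]; exact hB₀sub
      · rw [hBfne i h]
        exact Set.diff_subset.trans (hB'sub i (hmemS' i hi h))
    · intro i hiS j hjS hij
      by_cases h1 : i = i₀
      · have h2 : j ≠ i₀ := fun h => hij (h1.trans h.symm)
        show Disjoint (Bf i) (Bf j)
        rw [h1, hBf₀, hBfne j h2]
        exact disjoint_sdiff_self_right
      · by_cases h2 : j = i₀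
        · show Disjoint (Bf i) (Bf j)
          rw [h2, hBf₀, hBfne i h1]
          exact disjoint_sdiff_self_left
        · show Disjoint (Bf i) (Bf j)
          rw [hBfne i h1, hBfne j h2]
          exact (hB'disj (Finset.mem_coe.2 (hmemS' i (Finset.mem_coe.1 hiS) h1))
            (Finset.mem_coe.2 (hmemS' j (Finset.mem_coe.1 hjS) h2))
            hij).mono Set.diff_subset Set.diff_subset
    · intro i hi
      by_cases h : i = i₀
      · rw [h, hBf₀]; exact hmB₀.ge
      · rw [hBfne i h]
        have := hB'ge i (hmemS' i hi h)
        rwa [hm', Measure.restrict_apply (hB'm i), ← Set.diff_eq] at this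

/-- Shrinking each interval symmetrically to its middle `c`-fraction keeps at least a
`c`-fraction of the measure of the union. -/
lemma unionShrink {ι : Type*} [DecidableEq ι] (c : ℝ) (hc0 : 0 < c) (hc1 : c ≤ 1)
    (r d : ι → ℝ) (hrd : ∀ i, r i ≤ d i) (S : Finset ι) :
    ENNReal.ofReal c * volume (⋃ i ∈ S, Set.Ico (r i) (d i))
      ≤ volume (⋃ i ∈ S, Set.Ico (r i + (1-c)/2*(d i - r i)) (d i - (1-c)/2*(d i - r i))) := by
  classical
  set rh : ι → ℝ := fun i => r i + (1-c)/2*(d i - r i) with hrh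
  set dh : ι → ℝ := fun i => d i - (1-c)/2*(d i - r i) with hdh
  have hrh_mono : ∀ i j : ι, r j ≤ r i → d j ≤ d i → rh j ≤ rh i := by
    intro i j h1 h2
    simp only [hrh]
    nlinarith [mul_nonneg (by linarith : (0:ℝ) ≤ 1 - c) (sub_nonneg.2 h2),
      mul_nonneg (by linarith : (0:ℝ) ≤ 1 + c) (sub_nonneg.2 h1)]
  have hdh_mono : ∀ i j : ι, r j ≤ r i → d j ≤ d i → dh j ≤ dh i := by
    intro i j h1 h2
    simp only [hdh]
    nlinarith [mul_nonneg (by linarith : (0:ℝ) ≤ 1 - c) (sub_nonneg.2 h1),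
      mul_nonneg (by linarith : (0:ℝ) ≤ 1 + c) (sub_nonneg.2 h2)]
  induction S using Finset.strongInduction with
  | _ S IH =>
  rcases S.eq_empty_or_nonempty with rfl | hSne
  · simp
  by_cases hpair : ∃ i ∈ S, ∃ j ∈ S, i ≠ j ∧ r j ≤ r i ∧ d i ≤ d j
  · -- a dominated interval can be dropped
    obtain ⟨i, hi, j, hj, hij, h1, h2⟩ := hpair
    have hjS : j ∈ S.erase i := Finset.mem_erase.2 ⟨fun h => hij h.symm, hj⟩
    have hUeq : (⋃ k ∈ S, Set.Ico (r k) (d k)) = ⋃ k ∈ S.erase i, Set.Ico (r k) (d k) := by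
      apply Set.Subset.antisymm
      · intro x hx
        simp only [Set.mem_iUnion] at hx ⊢
        obtain ⟨k, hk, hxk⟩ := hx
        by_cases hki : k = i
        · subst hki
          exact ⟨j, hjS, le_trans h1 hxk.1, lt_of_lt_of_le hxk.2 h2⟩
        · exact ⟨k, Finset.mem_erase.2 ⟨hki, hk⟩, hxk⟩
      · intro x hx
        simp only [Set.mem_iUnion] at hx ⊢
        obtain ⟨k, hk, hxk⟩ := hx
        exact ⟨k, Finset.mem_of_mem_erase hk, hxk⟩
    rw [hUeq]
    refine le_trans (IH _ (Finset.erase_ssubset hi)) (measure_mono ?_)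
    exact Set.biUnion_subset_biUnion_left (fun k hk => Finset.mem_of_mem_erase hk)
  · push_neg at hpair
    obtain ⟨i₀, hi₀, hmaxr⟩ := S.exists_max_image r hSne
    have hrle : ∀ j ∈ S.erase i₀, r j ≤ r i₀ := fun j hj =>
      hmaxr j (Finset.mem_of_mem_erase hj)
    have hdle : ∀ j ∈ S.erase i₀, d j ≤ d i₀ := by
      intro j hj
      have hjne : i₀ ≠ j := fun h => (Finset.mem_erase.1 hj).1 h.symm
      exact (hpair i₀ hi₀ j (Finset.mem_of_mem_erase hj) hjne (hrle j hj)).le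
    rcases (S.erase i₀).eq_empty_or_nonempty with hS' | hS'ne
    · -- S is the single interval i₀
      have hSsingle : S = {i₀} := by
        apply Finset.eq_singleton_iff_unique_mem.2
        refine ⟨hi₀, fun x hx => ?_⟩
        by_contra hne
        exact absurd (Finset.mem_erase.2 ⟨hne, hx⟩) (by rw [hS']; simp)
      rw [hSsingle]
      simp only [Finset.mem_singleton, Set.iUnion_iUnion_eq_left]
      rw [Real.volume_Ico, Real.volume_Ico, ← ENNReal.ofReal_mul hc0.le]
      apply le_of_eq
      congr 1
      try simp only [hrh, hdh]
      ring
    · obtain ⟨j₁, hj₁, hmaxd⟩ := (S.erase i₀).exists_max_image d hS'ne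
      obtain ⟨j₂, hj₂, hmaxdh⟩ := (S.erase i₀).exists_max_image dh hS'ne
      set A := ⋃ j ∈ S.erase i₀, Set.Ico (r j) (d j) with hA
      set Ah := ⋃ j ∈ S.erase i₀, Set.Ico (rh j) (dh j) with hAh
      have hAm : MeasurableSet A :=
        MeasurableSet.biUnion (S.erase i₀).countable_toSet (fun j _ => measurableSet_Ico)
      have hAhm : MeasurableSet Ah :=
        MeasurableSet.biUnion (S.erase i₀).countable_toSet (fun j _ => measurableSet_Ico)
      have hXeq : Set.Ico (r i₀) (d i₀) \ A = Set.Ico (max (r i₀) (d j₁)) (d i₀) := by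
        ext x
        constructor
        · rintro ⟨hx, hxA⟩
          refine ⟨max_le hx.1 ?_, hx.2⟩
          by_contra hlt
          push_neg at hlt
          refine hxA ?_
          simp only [hA, Set.mem_iUnion]
          exact ⟨j₁, hj₁, le_trans (hrle j₁ hj₁) hx.1, hlt⟩
        · rintro ⟨hx1, hx2⟩
          refine ⟨⟨le_trans (le_max_left _ _) hx1, hx2⟩, fun hxA => ?_⟩
          simp only [hA, Set.mem_iUnion] at hxA
          obtain ⟨j, hj, hxj⟩ := hxA
          exact absurd hxj.2 (not_lt.2 (le_trans (hmaxd j hj) (le_trans (le_max_right _ _) hx1)))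
      have hXheq : Set.Ico (rh i₀) (dh i₀) \ Ah = Set.Ico (max (rh i₀) (dh j₂)) (dh i₀) := by
        ext x
        constructor
        · rintro ⟨hx, hxA⟩
          refine ⟨max_le hx.1 ?_, hx.2⟩
          by_contra hlt
          push_neg at hlt
          refine hxA ?_
          simp only [hAh, Set.mem_iUnion]
          exact ⟨j₂, hj₂,
            le_trans (hrh_mono i₀ j₂ (hrle j₂ hj₂) (hdle j₂ hj₂)) hx.1, hlt⟩
        · rintro ⟨hx1, hx2⟩
          refine ⟨⟨le_trans (le_max_left _ _) hx1, hx2⟩, fun hxA => ?_⟩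
          simp only [hAh, Set.mem_iUnion] at hxA
          obtain ⟨j, hj, hxj⟩ := hxA
          exact absurd hxj.2 (not_lt.2 (le_trans (hmaxdh j hj) (le_trans (le_max_right _ _) hx1)))
      have hU : (⋃ i ∈ S, Set.Ico (r i) (d i)) = A ∪ (Set.Ico (r i₀) (d i₀) \ A) := by
        conv_lhs => rw [← Finset.insert_erase hi₀]
        rw [Finset.set_biUnion_insert, Set.union_diff_self, Set.union_comm]
      have hUh : (⋃ i ∈ S, Set.Ico (rh i) (dh i)) = Ah ∪ (Set.Ico (rh i₀) (dh i₀) \ Ah) := by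
        conv_lhs => rw [← Finset.insert_erase hi₀]
        rw [Finset.set_biUnion_insert, Set.union_diff_self, Set.union_comm]
      rw [hU, hUh,
        measure_union disjoint_sdiff_self_right (measurableSet_Ico.diff hAm),
        measure_union disjoint_sdiff_self_right (measurableSet_Ico.diff hAhm),
        hXeq, hXheq, mul_add]
      apply add_le_add (IH _ (Finset.erase_ssubset hi₀))
      rw [Real.volume_Ico, Real.volume_Ico, ← ENNReal.ofReal_mul hc0.le]
      rcases le_or_gt (d i₀) (max (r i₀) (d j₁)) with hemp | hne
      · have hnp : c * (d i₀ - max (r i₀) (d j₁)) ≤ 0 := by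
          nlinarith [mul_nonneg hc0.le (sub_nonneg.2 hemp)]
        rw [ENNReal.ofReal_of_nonpos hnp]
        exact zero_le
      · apply ENNReal.ofReal_le_ofReal
        rcases le_total (dh j₂) (rh i₀) with h | h
        · rw [max_eq_left h]
          have hM1 : r i₀ ≤ max (r i₀) (d j₁) := le_max_left _ _
          try simp only [hrh, hdh]
          nlinarith [mul_nonneg hc0.le (sub_nonneg.2 hM1)]
        · rw [max_eq_right h]
          have hM2 : d j₂ ≤ max (r i₀) (d j₁) :=
            le_trans (hmaxd j₂ hj₂) (le_max_right _ _)
          have h1 : d j₂ ≤ d i₀ := hdle j₂ hj₂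
          have h2 : r j₂ ≤ r i₀ := hrle j₂ hj₂
          try simp only [hrh, hdh]
          nlinarith [mul_nonneg (by linarith : (0:ℝ) ≤ 1 - c) (sub_nonneg.2 h1),
            mul_nonneg (by linarith : (0:ℝ) ≤ 1 - c) (sub_nonneg.2 h2),
            mul_nonneg hc0.le (sub_nonneg.2 hM2)]

lemma holder_bound {α : ℝ} (hα : 1 < α) {s : ℝ → ℝ} (hs : Measurable s)
    (hsnn : ∀ t, 0 ≤ s t) {A : Set ℝ} (hA : MeasurableSet A) {wi : ℝ} (hw : 0 ≤ wi)
    (hwork : wi ≤ ∫ t in A, s t) :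
    ENNReal.ofReal (wi ^ α) ≤ (∫⁻ t in A, ENNReal.ofReal (s t ^ α)) * (volume A) ^ (α - 1) := by
  have hα0 : (0:ℝ) < α := lt_trans one_pos hα
  -- Step 1 : ofReal wi ≤ ∫⁻ ofReal (s t)
  have step1 : ENNReal.ofReal wi ≤ ∫⁻ t in A, ENNReal.ofReal (s t) := by
    by_cases hint : IntegrableOn s A volume
    · rw [← MeasureTheory.ofReal_integral_eq_lintegral_ofReal hint
        (Filter.Eventually.of_forall (fun t => hsnn t))]
      exact ENNReal.ofReal_le_ofReal hwork
    · rw [MeasureTheory.integral_undef hint] at hwork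
      rw [ENNReal.ofReal_of_nonpos hwork]
      exact zero_le
  -- Step 2 : Hölder
  set q : ℝ := α / (α - 1) with hq
  have hpq : Real.HolderConjugate α q := Real.HolderConjugate.conjExponent hα
  have holder := ENNReal.lintegral_mul_le_Lp_mul_Lq (volume.restrict A) hpq
    (hs.ennreal_ofReal.aemeasurable) (aemeasurable_const (b := (1:ℝ≥0∞)))
  simp only [Pi.mul_apply, mul_one, ENNReal.one_rpow] at holder
  rw [setLIntegral_one] at holder
  have hrw : ∀ t : ℝ, ENNReal.ofReal (s t) ^ α = ENNReal.ofReal (s t ^ α) := fun t =>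
    ENNReal.ofReal_rpow_of_nonneg (hsnn t) hα0.le
  simp only [hrw] at holder
  -- combine
  have step3 : ENNReal.ofReal wi
      ≤ (∫⁻ t in A, ENNReal.ofReal (s t ^ α)) ^ (1/α) * (volume A) ^ (1/q) :=
    le_trans step1 holder
  have step4 := ENNReal.rpow_le_rpow step3 hα0.le
  rw [← ENNReal.ofReal_rpow_of_nonneg hw hα0.le]
  refine le_trans step4 (le_of_eq ?_)
  rw [ENNReal.mul_rpow_of_nonneg _ _ hα0.le, ← ENNReal.rpow_mul, ← ENNReal.rpow_mul]
  congr 1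
  · rw [one_div_mul_cancel hα0.ne', ENNReal.rpow_one]
  · congr 1
    rw [hq]
    field_simp

end ShrinkingRatioAux

/-- **Lemma `ShrinkingRatio`.** Symmetrically shrinking every job interval
`[r i, d i)` to `[r i + ((1-c)/2)(d i - r i), d i - ((1-c)/2)(d i - r i))` increases
the optimal energy by a factor of at most `(1/c)^(α-1)`. -/
theorem shrinking_ratio (α : ℝ) (hα : 1 < α) (n : ℕ)
    (r d w : Fin n → ℝ) (c : ℝ)
    (hrd : ∀ i, r i < d i) (hw : ∀ i, 0 ≤ w i)
    (hc0 : 0 < c) (hc1 : c ≤ 1) :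
    SSOpt α (⟨fun i => r i + (1 - c) / 2 * (d i - r i),
              fun i => d i - (1 - c) / 2 * (d i - r i), w⟩ : SSInstance (Fin n))
      ≤ ENNReal.ofReal ((1 / c) ^ (α - 1)) *
        SSOpt α (⟨r, d, w⟩ : SSInstance (Fin n)) := by
  classical
  have hα0 : (0:ℝ) < α := lt_trans one_pos hα
  have hα1 : (0:ℝ) ≤ α - 1 := by linarith
  set rh : Fin n → ℝ := fun i => r i + (1 - c) / 2 * (d i - r i) with hrhdef
  set dh : Fin n → ℝ := fun i => d i - (1 - c) / 2 * (d i - r i) with hdhdef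
  set k : ℝ≥0∞ := ENNReal.ofReal ((1 / c) ^ (α - 1)) with hkdef
  have hk0 : k ≠ 0 := by
    rw [hkdef, Ne, ENNReal.ofReal_eq_zero, not_le]
    positivity
  have hkt : k ≠ ⊤ := ENNReal.ofReal_ne_top
  have hkinv : k * (ENNReal.ofReal c) ^ (α - 1) = 1 := by
    rw [hkdef, one_div, ← ENNReal.ofReal_rpow_of_nonneg (by positivity) hα1,
      ENNReal.ofReal_inv_of_pos hc0, ENNReal.inv_rpow]
    exact ENNReal.inv_mul_cancel
      (by simp [ENNReal.rpow_eq_zero_iff, ENNReal.ofReal_eq_zero, not_le, hc0,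
        ENNReal.ofReal_ne_top])
      (ENNReal.rpow_ne_top_of_nonneg hα1 ENNReal.ofReal_ne_top)
  -- main step: from any feasible schedule of the original instance, build one for the
  -- shrunk instance of energy at most `k` times larger.
  have main : ∀ s σ, SSFeasible (⟨r, d, w⟩ : SSInstance (Fin n)) s σ →
      SSOpt α (⟨rh, dh, w⟩ : SSInstance (Fin n)) ≤ k * SSEnergy α s := by
    intro s σ hfeas
    obtain ⟨hsm, hσm, hsnn, hjobs⟩ := hfeas
    set A : Fin n → Set ℝ := fun i => {t | σ t = some i} with hAdef
    have hAm : ∀ i, MeasurableSet (A i) := by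
      intro i
      have hpre : A i = σ ⁻¹' {some i} := by
        ext t; simp [hAdef]
      rw [hpre]
      exact hσm trivial
    have hAdisj : ∀ i j : Fin n, i ≠ j → Disjoint (A i) (A j) := by
      intro i j hij
      apply Set.disjoint_left.2
      intro t hti htj
      exact hij (Option.some_injective _ ((Set.mem_setOf_eq ▸ hti).symm.trans htj))
    have hAsub : ∀ i, A i ⊆ Set.Ico (r i) (d i) := fun i => (hjobs i).1
    have hAwork : ∀ i, w i ≤ ∫ t in A i, s t := fun i => (hjobs i).2
    have hAfin : ∀ i, volume (A i) ≠ ⊤ := fun i =>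
      ne_top_of_le_ne_top (by rw [Real.volume_Ico]; exact ENNReal.ofReal_ne_top)
        (measure_mono (hAsub i))
    set g : ℝ → ℝ≥0∞ := fun t => ENNReal.ofReal (s t ^ α) with hgdef
    set Ei : Fin n → ℝ≥0∞ := fun i => ∫⁻ t in A i, g t with hEidef
    have hP : ∀ i, ENNReal.ofReal (w i ^ α) ≤ Ei i * (volume (A i)) ^ (α - 1) :=
      fun i => holder_bound hα hsm hsnn (hAm i) (hw i) (hAwork i)
    -- Hall allocation inside the shrunk windows
    set b : Fin n → ℝ≥0∞ := fun i => ENNReal.ofReal c * volume (A i) with hbdef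
    have hfinw : ∀ i ∈ (Finset.univ : Finset (Fin n)),
        volume (Set.Ico (rh i) (dh i)) ≠ ⊤ := fun i _ => by
      rw [Real.volume_Ico]; exact ENNReal.ofReal_ne_top
    have hHall : ∀ T ⊆ (Finset.univ : Finset (Fin n)),
        (∑ i ∈ T, b i) ≤ volume (⋃ i ∈ T, Set.Ico (rh i) (dh i)) := by
      intro T _
      have h1 : (∑ i ∈ T, b i) = ENNReal.ofReal c * ∑ i ∈ T, volume (A i) := by
        rw [hbdef, Finset.mul_sum]
      have h2 : (∑ i ∈ T, volume (A i)) = volume (⋃ i ∈ T, A i) :=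
        (measure_biUnion_finset
          (fun i _ j _ hij => hAdisj i j hij) (fun i _ => hAm i)).symm
      have h3 : volume (⋃ i ∈ T, A i) ≤ volume (⋃ i ∈ T, Set.Ico (r i) (d i)) :=
        measure_mono (Set.iUnion₂_mono fun i _ => hAsub i)
      calc (∑ i ∈ T, b i) = ENNReal.ofReal c * volume (⋃ i ∈ T, A i) := by rw [h1, h2]
        _ ≤ ENNReal.ofReal c * volume (⋃ i ∈ T, Set.Ico (r i) (d i)) := by
            exact mul_le_mul_right h3 _
        _ ≤ volume (⋃ i ∈ T, Set.Ico (rh i) (dh i)) :=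
            unionShrink c hc0 hc1 r d (fun i => (hrd i).le) T
    obtain ⟨B, hBm, hBsub', hBdisj, hBge'⟩ :=
      hallAlloc rh dh b Finset.univ volume inferInstance hfinw hHall
    have hBsub : ∀ i, B i ⊆ Set.Ico (rh i) (dh i) := fun i =>
      hBsub' i (Finset.mem_univ i)
    have hBge : ∀ i, b i ≤ volume (B i) := fun i => hBge' i (Finset.mem_univ i)
    have hBdisj' : ∀ i j : Fin n, i ≠ j → Disjoint (B i) (B j) := fun i j hij =>
      hBdisj (Finset.mem_coe.2 (Finset.mem_univ i)) (Finset.mem_coe.2 (Finset.mem_univ j)) hij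
    have hBfin : ∀ i, volume (B i) ≠ ⊤ := fun i =>
      ne_top_of_le_ne_top (by rw [Real.volume_Ico]; exact ENNReal.ofReal_ne_top)
        (measure_mono (hBsub i))
    -- the new schedule
    set v : Fin n → ℝ := fun i => w i / (volume (B i)).toReal with hvdef
    have hvnn : ∀ i, 0 ≤ v i := fun i => div_nonneg (hw i) ENNReal.toReal_nonneg
    set s' : ℝ → ℝ := fun t => ∑ i, Set.indicator (B i) (fun _ => v i) t with hs'def
    have hs'm : Measurable s' :=
      Finset.measurable_sum _ (fun i _ => (measurable_const.indicator (hBm i)))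
    have hs'nn : ∀ t, 0 ≤ s' t := fun t =>
      Finset.sum_nonneg (fun i _ => Set.indicator_nonneg (fun _ _ => hvnn i) t)
    have hs'val : ∀ i, ∀ t ∈ B i, s' t = v i := by
      intro i t ht
      have hrfl : s' t = ∑ j, Set.indicator (B j) (fun _ => v j) t := rfl
      rw [hrfl, Finset.sum_eq_single i]
      · exact Set.indicator_of_mem ht _
      · intro j _ hji
        apply Set.indicator_of_notMem
        exact fun htj => (Set.disjoint_left.1 (hBdisj' j i hji)) htj ht
      · exact fun h => absurd (Finset.mem_univ i) h
    set σ' : ℝ → Option (Fin n) :=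
      fun t => if h : ∃ i, t ∈ B i then some (Classical.choose h) else none with hσ'def
    have hfib : ∀ i, {t | σ' t = some i} = B i := by
      intro i
      ext t
      simp only [Set.mem_setOf_eq, hσ'def]
      constructor
      · intro ht
        by_cases h : ∃ j, t ∈ B j
        · rw [dif_pos h] at ht
          have := Classical.choose_spec h
          rwa [Option.some_injective _ ht] at this
        · rw [dif_neg h] at ht; exact absurd ht (by simp)
      · intro ht
        have h : ∃ j, t ∈ B j := ⟨i, ht⟩
        rw [dif_pos h]
        congr 1
        by_contra hne
        exact (Set.disjoint_left.1 (hBdisj' _ _ hne)) (Classical.choose_spec h) ht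
    have hσ'm : Measurable σ' := by
      apply measurable_to_countable'
      intro y
      cases y with
      | none =>
        have : σ' ⁻¹' {none} = (⋃ i, B i)ᶜ := by
          ext t
          simp only [Set.mem_preimage, Set.mem_singleton_iff, hσ'def, Set.mem_compl_iff,
            Set.mem_iUnion]
          constructor
          · intro ht h
            rw [dif_pos h] at ht; exact absurd ht (by simp)
          · intro ht
            rw [dif_neg ht]
        rw [this]
        exact (MeasurableSet.iUnion (fun i => hBm i)).compl
      | some i =>
        have : σ' ⁻¹' {some i} = B i := hfib i
        rw [this]; exact hBm i
    -- feasibility for the shrunk instance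
    have hfeas' : SSFeasible (⟨rh, dh, w⟩ : SSInstance (Fin n)) s' σ' := by
      refine ⟨hs'm, hσ'm, hs'nn, fun i => ⟨?_, ?_⟩⟩
      · rw [hfib i]; exact hBsub i
      · rw [hfib i]
        have hcong : ∫ t in B i, s' t = ∫ _t in B i, v i :=
          setIntegral_congr_fun (hBm i) (fun t ht => hs'val i t ht)
        rw [hcong, setIntegral_const, smul_eq_mul]
        show w i ≤ (volume (B i)).toReal * v i
        by_cases hvol : volume (B i) = 0
        · have hA0 : volume (A i) = 0 := by
            have hble := hBge i
            rw [hvol] at hble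
            have hb00 : b i = 0 := le_antisymm hble (zero_le)
            simp only [hbdef] at hb00
            rcases mul_eq_zero.1 hb00 with h | h
            · exact absurd h (by simp [ENNReal.ofReal_eq_zero, not_le, hc0])
            · exact h
          have hEi0 : Ei i = 0 := by
            simp [hEidef, Measure.restrict_eq_zero.2 hA0]
          have hw0 : w i = 0 := by
            by_contra hne
            have hwpos : 0 < w i := lt_of_le_of_ne (hw i) (Ne.symm hne)
            have := hP i
            rw [hEi0, zero_mul] at this
            have h2 : ENNReal.ofReal (w i ^ α) = 0 := le_antisymm this (zero_le)
            rw [ENNReal.ofReal_eq_zero] at h2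
            exact absurd h2 (not_le.2 (Real.rpow_pos_of_pos hwpos α))
          rw [hw0]
          positivity
        · have htB : 0 < (volume (B i)).toReal :=
            ENNReal.toReal_pos hvol (hBfin i)
          simp only [hvdef]
          rw [mul_comm, div_mul_cancel₀ _ htB.ne']
    -- energy computation
    have henergy : SSEnergy α s' = ∑ i, ENNReal.ofReal (v i ^ α) * volume (B i) := by
      rw [SSEnergy]
      have hpt : ∀ t, ENNReal.ofReal (s' t ^ α)
          = ∑ i, Set.indicator (B i) (fun _ => ENNReal.ofReal (v i ^ α)) t := by
        intro t
        by_cases h : ∃ i, t ∈ B i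
        · obtain ⟨i, hi⟩ := h
          rw [Finset.sum_eq_single i]
          · rw [Set.indicator_of_mem hi, hs'val i t hi]
          · intro j _ hji
            apply Set.indicator_of_notMem
            exact fun htj => (Set.disjoint_left.1 (hBdisj' j i hji)) htj hi
          · exact fun h => absurd (Finset.mem_univ i) h
        · push_neg at h
          have h0 : s' t = 0 := by
            rw [hs'def]
            exact Finset.sum_eq_zero (fun i _ => Set.indicator_of_notMem (h i) _)
          rw [h0, Real.zero_rpow hα0.ne', ENNReal.ofReal_zero]
          exact (Finset.sum_eq_zero (fun i _ => Set.indicator_of_notMem (h i) _)).symm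
      simp_rw [hpt]
      rw [lintegral_finset_sum _ (fun i _ => measurable_const.indicator (hBm i))]
      congr 1
      ext i
      rw [lintegral_indicator (hBm i), setLIntegral_const]
    -- per-job energy bound
    have hperjob : ∀ i, ENNReal.ofReal (v i ^ α) * volume (B i) ≤ k * Ei i := by
      intro i
      by_cases hvol : volume (B i) = 0
      · rw [hvol, mul_zero]; exact zero_le
      by_cases hw0 : w i = 0
      · simp only [hvdef, hw0, zero_div]
        rw [Real.zero_rpow hα0.ne', ENNReal.ofReal_zero, zero_mul]
        exact zero_le
      have hwpos : 0 < w i := lt_of_le_of_ne (hw i) (Ne.symm hw0)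
      have htB : 0 < (volume (B i)).toReal := ENNReal.toReal_pos hvol (hBfin i)
      set x : ℝ≥0∞ := volume (B i) with hxdef
      have hy0 : x ^ (α - 1) ≠ 0 :=
        (ENNReal.rpow_pos (lt_of_le_of_ne (zero_le) (Ne.symm hvol)) (hBfin i)).ne'
      have hyt : x ^ (α - 1) ≠ ⊤ := ENNReal.rpow_ne_top_of_nonneg hα1 (hBfin i)
      apply (ENNReal.mul_le_mul_iff_left hy0 hyt).1
      have hcompute : ENNReal.ofReal (v i ^ α) * x * x ^ (α - 1)
          = ENNReal.ofReal (w i ^ α) := by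
        have hxx : x * x ^ (α - 1) = x ^ α := by
          nth_rewrite 1 [← ENNReal.rpow_one x]
          rw [← ENNReal.rpow_add _ _ hvol (hBfin i)]
          norm_num
        rw [mul_assoc, hxx]
        have hxr : x ^ α = ENNReal.ofReal ((volume (B i)).toReal ^ α) := by
          rw [← ENNReal.ofReal_rpow_of_nonneg (x := (volume (B i)).toReal)
            ENNReal.toReal_nonneg hα0.le, ENNReal.ofReal_toReal (hBfin i)]
        rw [hxr, ← ENNReal.ofReal_mul (by positivity), ← Real.mul_rpow (hvnn i)
          ENNReal.toReal_nonneg]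
        congr 2
        simp only [hvdef]
        exact div_mul_cancel₀ _ htB.ne'
      rw [hcompute]
      calc ENNReal.ofReal (w i ^ α) ≤ Ei i * (volume (A i)) ^ (α - 1) := hP i
        _ = (k * (ENNReal.ofReal c) ^ (α - 1)) * (Ei i * (volume (A i)) ^ (α - 1)) := by
            rw [hkinv, one_mul]
        _ = k * Ei i * ((ENNReal.ofReal c) ^ (α - 1) * (volume (A i)) ^ (α - 1)) := by
            ring
        _ = k * Ei i * (ENNReal.ofReal c * volume (A i)) ^ (α - 1) := by
            rw [ENNReal.mul_rpow_of_nonneg _ _ hα1]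
        _ ≤ k * Ei i * x ^ (α - 1) :=
            mul_le_mul_right (ENNReal.rpow_le_rpow (hBge i) hα1) _
    -- total energy bound
    have htotal : SSEnergy α s' ≤ k * SSEnergy α s := by
      rw [henergy]
      calc (∑ i, ENNReal.ofReal (v i ^ α) * volume (B i)) ≤ ∑ i, k * Ei i :=
            Finset.sum_le_sum (fun i _ => hperjob i)
        _ = k * ∑ i, Ei i := (Finset.mul_sum _ _ _).symm
        _ ≤ k * SSEnergy α s := by
            apply mul_le_mul_right
            have hsum : (∑ i, Ei i) = ∫⁻ t in ⋃ i ∈ Finset.univ, A i, g t := by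
              rw [lintegral_biUnion_finset
                (fun i _ j _ hij => hAdisj i j hij) (fun i _ => hAm i)]
            rw [hsum, SSEnergy]
            exact setLIntegral_le_lintegral _ _
    refine le_trans (sInf_le ?_) htotal
    exact ⟨s', σ', hfeas', rfl⟩
  -- conclude by taking the infimum
  rw [show SSOpt α (⟨r, d, w⟩ : SSInstance (Fin n))
      = sInf {E | ∃ s σ, SSFeasible (⟨r, d, w⟩ : SSInstance (Fin n)) s σ ∧ E = SSEnergy α s}
      from rfl]
  have hdiv : SSOpt α (⟨rh, dh, w⟩ : SSInstance (Fin n)) / k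
      ≤ sInf {E | ∃ s σ, SSFeasible (⟨r, d, w⟩ : SSInstance (Fin n)) s σ ∧ E = SSEnergy α s} := by
    apply le_sInf
    rintro E ⟨s, σ, hfeas, rfl⟩
    exact ENNReal.div_le_of_le_mul' (main s σ hfeas)
  calc SSOpt α (⟨rh, dh, w⟩ : SSInstance (Fin n))
      = SSOpt α (⟨rh, dh, w⟩ : SSInstance (Fin n)) / k * k := by
        rw [ENNReal.div_mul_cancel hk0 hkt]
    _ ≤ sInf {E | ∃ s σ, SSFeasible (⟨r, d, w⟩ : SSInstance (Fin n)) s σ ∧ E = SSEnergy α s} * k :=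
        mul_le_mul_left hdiv k
    _ = k * sInf {E | ∃ s σ, SSFeasible (⟨r, d, w⟩ : SSInstance (Fin n)) s σ ∧ E = SSEnergy α s} :=
        mul_comm _ _
end

section
/- Energy of the predicted instance versus the actual instance (Lemma 'PredictionError'): Let η ≥ 0. Consider n jobs with workloads w_i ≥ 0, actual release times r_i and deadlines d_i with r_i < d_i, and predicted release times p_i and deadlines q_i with p_i < q_i, such that |p_i − r_i| ≤ η·(q_i − p_i) and |q_i − d_i| ≤ η·(q_i − p_i) for every i. Let J_PQ be the instance in which job i has interval [p_i, q_i) and workload w_i, and J_RD the instance in which job i has interval [r_i, d_i) and workload w_i. Then OPT(J_PQ) ≤ (2η + 1)^(α−1) · OPT(J_RD). -/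
open MeasureTheory
open scoped ENNReal

lemma PE_le_of_forall_mul {a b : ℝ≥0∞} (h : ∀ x : ℝ, 1 < x → a ≤ ENNReal.ofReal x * b) :
    a ≤ b := by
  rcases eq_or_ne b ⊤ with rfl | hbT
  · exact le_top
  rcases eq_or_ne b 0 with rfl | hb0
  · simpa using h 2 one_lt_two
  refine ENNReal.le_of_forall_pos_le_add fun ε hε _ => ?_
  have hbt : 0 < b.toReal := ENNReal.toReal_pos hb0 hbT
  have hx : (1:ℝ) < 1 + ε / b.toReal := by
    have : (0:ℝ) < ε / b.toReal := div_pos (by exact_mod_cast hε) hbt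
    linarith
  refine (h _ hx).trans ?_
  have : ENNReal.ofReal (1 + (ε:ℝ) / b.toReal) = 1 + ENNReal.ofReal ((ε:ℝ) / b.toReal) := by
    rw [ENNReal.ofReal_add zero_le_one (by positivity), ENNReal.ofReal_one]
  rw [this, add_mul, one_mul]
  gcongr
  have : ENNReal.ofReal ((ε:ℝ) / b.toReal) * ENNReal.ofReal b.toReal
      = ENNReal.ofReal ((ε:ℝ) / b.toReal * b.toReal) := (ENNReal.ofReal_mul (by positivity)).symm
  rw [ENNReal.ofReal_toReal hbT] at this
  rw [this, div_mul_cancel₀ _ (ne_of_gt hbt), ENNReal.ofReal_coe_nnreal]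

lemma PE_expand_bound {ι : Type*} [DecidableEq ι] (η : ℝ) (hη : 0 ≤ η) :
    ∀ (N : ℕ) (S : Finset ι) (p q : ι → ℝ), S.card ≤ N → (∀ i ∈ S, p i ≤ q i) →
    volume (⋃ i ∈ S, Set.Ico (p i - η*(q i - p i)) (q i + η*(q i - p i)))
      ≤ ENNReal.ofReal (1+2*η) * volume (⋃ i ∈ S, Set.Ico (p i) (q i)) := by
  intro N
  induction N with
  | zero =>
    intro S p q hcard _
    have : S = ∅ := Finset.card_eq_zero.mp (Nat.le_zero.mp hcard)
    subst this
    simp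
  | succ N ih =>
    intro S p q hcard hle
    by_cases hov : ∃ i ∈ S, ∃ j ∈ S, i ≠ j ∧
        (Set.Ico (p i) (q i) ∩ Set.Ico (p j) (q j)).Nonempty
    · obtain ⟨i, hi, j, hj, hij, t, hti, htj⟩ := hov
      set P : ι → ℝ := Function.update p j (min (p i) (p j)) with hP
      set Q : ι → ℝ := Function.update q j (max (q i) (q j)) with hQ
      have hPj : P j = min (p i) (p j) := Function.update_self _ _ _
      have hQj : Q j = max (q i) (q j) := Function.update_self _ _ _
      have hPk : ∀ k ≠ j, P k = p k := fun k hk => Function.update_of_ne hk _ _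
      have hQk : ∀ k ≠ j, Q k = q k := fun k hk => Function.update_of_ne hk _ _
      have hji : j ∈ S.erase i := Finset.mem_erase.mpr ⟨fun h => hij h.symm, hj⟩
      have hunion : Set.Ico (p i) (q i) ∪ Set.Ico (p j) (q j)
          = Set.Ico (min (p i) (p j)) (max (q i) (q j)) := by
        apply Set.Ico_union_Ico'
        · exact le_trans htj.1 hti.2.le
        · exact le_trans hti.1 htj.2.le
      have key1 : (⋃ k ∈ S.erase i, Set.Ico (P k) (Q k)) = ⋃ k ∈ S, Set.Ico (p k) (q k) := by
        ext x
        simp only [Set.mem_iUnion, exists_prop]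
        constructor
        · rintro ⟨k, hk, hx⟩
          by_cases hkj : k = j
          · subst hkj
            rw [hPj, hQj, ← hunion] at hx
            rcases hx with hx | hx
            · exact ⟨i, hi, hx⟩
            · exact ⟨k, hj, hx⟩
          · rw [hPk k hkj, hQk k hkj] at hx
            exact ⟨k, Finset.mem_of_mem_erase hk, hx⟩
        · rintro ⟨k, hk, hx⟩
          by_cases hki : k = i
          · refine ⟨j, hji, ?_⟩
            rw [hPj, hQj, ← hunion]
            exact Or.inl (hki ▸ hx)
          by_cases hkj : k = j
          · refine ⟨j, hji, ?_⟩
            rw [hPj, hQj, ← hunion]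
            exact Or.inr (hkj ▸ hx)
          · exact ⟨k, Finset.mem_erase.mpr ⟨hki, hk⟩, by rwa [hPk k hkj, hQk k hkj]⟩
      have key2 : (⋃ k ∈ S, Set.Ico (p k - η*(q k - p k)) (q k + η*(q k - p k)))
          ⊆ ⋃ k ∈ S.erase i, Set.Ico (P k - η*(Q k - P k)) (Q k + η*(Q k - P k)) := by
        intro x hx
        simp only [Set.mem_iUnion, exists_prop] at hx ⊢
        obtain ⟨k, hk, hxk⟩ := hx
        have sub : ∀ k' ∈ S, (k' = i ∨ k' = j) →
            Set.Ico (p k' - η*(q k' - p k')) (q k' + η*(q k' - p k'))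
            ⊆ Set.Ico (P j - η*(Q j - P j)) (Q j + η*(Q j - P j)) := by
          rintro k' _ hk'
          have h1 : P j ≤ p k' := by
            rw [hPj]; rcases hk' with rfl | rfl
            · exact min_le_left _ _
            · exact min_le_right _ _
          have h2 : q k' ≤ Q j := by
            rw [hQj]; rcases hk' with rfl | rfl
            · exact le_max_left _ _
            · exact le_max_right _ _
          have h3 : η * (q k' - p k') ≤ η * (Q j - P j) :=
            mul_le_mul_of_nonneg_left (by linarith) hη
          apply Set.Ico_subset_Ico <;> linarith
        by_cases hki : k = i
        · exact ⟨j, hji, sub k hk (Or.inl hki) hxk⟩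
        by_cases hkj : k = j
        · exact ⟨j, hji, sub k hk (Or.inr hkj) hxk⟩
        · exact ⟨k, Finset.mem_erase.mpr ⟨hki, hk⟩, by rwa [hPk k hkj, hQk k hkj]⟩
      have hcard' : (S.erase i).card ≤ N := by
        rw [Finset.card_erase_of_mem hi]
        omega
      have hle' : ∀ k ∈ S.erase i, P k ≤ Q k := by
        intro k hk
        rcases eq_or_ne k j with rfl | hkj
        · rw [hPj, hQj]
          exact le_trans (min_le_left _ _) (le_trans (hle i hi) (le_max_left _ _))
        · rw [hPk k hkj, hQk k hkj]
          exact hle k (Finset.mem_of_mem_erase hk)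
      calc volume (⋃ k ∈ S, Set.Ico (p k - η*(q k - p k)) (q k + η*(q k - p k)))
          ≤ volume (⋃ k ∈ S.erase i, Set.Ico (P k - η*(Q k - P k)) (Q k + η*(Q k - P k))) :=
            measure_mono key2
        _ ≤ ENNReal.ofReal (1+2*η) * volume (⋃ k ∈ S.erase i, Set.Ico (P k) (Q k)) :=
            ih (S.erase i) P Q hcard' hle'
        _ = ENNReal.ofReal (1+2*η) * volume (⋃ k ∈ S, Set.Ico (p k) (q k)) := by rw [key1]
    · push_neg at hov
      have hdisj : (S : Set ι).PairwiseDisjoint (fun k => Set.Ico (p k) (q k)) := by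
        intro a ha b hb hab
        have := hov a (by simpa using ha) b (by simpa using hb) hab
        simp only [Function.onFun]
        exact Set.disjoint_iff_inter_eq_empty.mpr this
      calc volume (⋃ k ∈ S, Set.Ico (p k - η*(q k - p k)) (q k + η*(q k - p k)))
          ≤ ∑ k ∈ S, volume (Set.Ico (p k - η*(q k - p k)) (q k + η*(q k - p k))) :=
            measure_biUnion_finset_le S _
        _ = ∑ k ∈ S, ENNReal.ofReal (1+2*η) * volume (Set.Ico (p k) (q k)) := by
            apply Finset.sum_congr rfl
            intro k hk
            rw [Real.volume_Ico, Real.volume_Ico, ← ENNReal.ofReal_mul (by linarith)]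
            congr 1
            ring
        _ = ENNReal.ofReal (1+2*η) * ∑ k ∈ S, volume (Set.Ico (p k) (q k)) := by
            rw [Finset.mul_sum]
        _ = ENNReal.ofReal (1+2*η) * volume (⋃ k ∈ S, Set.Ico (p k) (q k)) := by
            rw [measure_biUnion_finset hdisj (fun k _ => measurableSet_Ico)]

-- cell z = [zδ, zδ+δ)
lemma PE_cell_disjoint {δ : ℝ} (hδ : 0 < δ) {z z' : ℤ} (h : z ≠ z') :
    Disjoint (Set.Ico ((z:ℝ)*δ) ((z:ℝ)*δ + δ)) (Set.Ico ((z':ℝ)*δ) ((z':ℝ)*δ + δ)) := by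
  rw [Set.Ico_disjoint_Ico]
  rcases lt_or_gt_of_ne h with hlt | hlt
  · have : (z:ℝ) + 1 ≤ (z':ℝ) := by exact_mod_cast hlt
    have : (z:ℝ)*δ + δ ≤ (z':ℝ)*δ := by nlinarith
    exact le_trans (min_le_left _ _) (le_trans this (le_max_right _ _))
  · have : (z':ℝ) + 1 ≤ (z:ℝ) := by exact_mod_cast hlt
    have : (z':ℝ)*δ + δ ≤ (z:ℝ)*δ := by nlinarith
    exact le_trans (min_le_right _ _) (le_trans this (le_max_left _ _))

lemma PE_cell_subset {δ : ℝ} (hδ : 0 < δ) {a b : ℝ} {z : ℤ}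
    (hz : z ∈ Finset.Ico ⌈a/δ⌉ ⌊b/δ⌋) :
    Set.Ico ((z:ℝ)*δ) ((z:ℝ)*δ + δ) ⊆ Set.Ico a b := by
  rw [Finset.mem_Ico] at hz
  apply Set.Ico_subset_Ico
  · have h1 : a/δ ≤ (z:ℝ) := le_trans (Int.le_ceil _) (by exact_mod_cast hz.1)
    calc a = a/δ * δ := by field_simp
    _ ≤ (z:ℝ)*δ := by nlinarith
  · have h2 : (z:ℝ) + 1 ≤ b/δ := by
      have : (z:ℝ) + 1 ≤ (⌊b/δ⌋ : ℝ) := by exact_mod_cast hz.2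
      exact le_trans this (Int.floor_le _)
    calc (z:ℝ)*δ + δ = ((z:ℝ)+1)*δ := by ring
    _ ≤ b/δ * δ := by nlinarith
    _ = b := by field_simp

/-- Packing via Hall's marriage theorem on grid cells. -/
lemma PE_cells_pack {n : ℕ} (p q : Fin n → ℝ) (δ : ℝ) (hδ : 0 < δ) (k : Fin n → ℕ)
    (hall : ∀ S : Finset (Fin n),
      ∑ i ∈ S, k i ≤ (S.biUnion (fun i => Finset.Ico ⌈p i/δ⌉ ⌊q i/δ⌋)).card) :
    ∃ B : Fin n → Set ℝ, (∀ i, MeasurableSet (B i)) ∧ (∀ i, B i ⊆ Set.Ico (p i) (q i)) ∧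
      Pairwise (Function.onFun Disjoint B) ∧
      ∀ i, volume (B i) = (k i : ℝ≥0∞) * ENNReal.ofReal δ := by
  classical
  set T : Fin n → Finset ℤ := fun i => Finset.Ico ⌈p i/δ⌉ ⌊q i/δ⌋ with hT
  have hhall : ∀ s : Finset ((i : Fin n) × Fin (k i)),
      s.card ≤ (s.biUnion (fun b => T b.1)).card := by
    intro s
    have h1 : s.biUnion (fun b => T b.1) = (s.image Sigma.fst).biUnion T := by
      ext z
      simp only [Finset.mem_biUnion, Finset.mem_image]
      constructor
      · rintro ⟨b, hb, hz⟩; exact ⟨b.1, ⟨b, hb, rfl⟩, hz⟩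
      · rintro ⟨i, ⟨b, hb, rfl⟩, hz⟩; exact ⟨b, hb, hz⟩
    have h2 : s ⊆ (s.image Sigma.fst).sigma (fun i => (Finset.univ : Finset (Fin (k i)))) := by
      intro b hb
      rw [Finset.mem_sigma]
      exact ⟨Finset.mem_image_of_mem _ hb, Finset.mem_univ _⟩
    calc s.card ≤ ((s.image Sigma.fst).sigma (fun i => (Finset.univ : Finset (Fin (k i))))).card :=
          Finset.card_le_card h2
      _ = ∑ i ∈ s.image Sigma.fst, k i := by
          rw [Finset.card_sigma]
          simp
      _ ≤ ((s.image Sigma.fst).biUnion T).card := hall _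
      _ = (s.biUnion (fun b => T b.1)).card := by rw [h1]
  obtain ⟨f, hfinj, hft⟩ :=
    (Finset.all_card_le_biUnion_card_iff_exists_injective (fun b : (i : Fin n) × Fin (k i) => T b.1)).mp hhall
  refine ⟨fun i => ⋃ j : Fin (k i), Set.Ico ((f ⟨i,j⟩ : ℝ)*δ) ((f ⟨i,j⟩ : ℝ)*δ + δ), ?_, ?_, ?_, ?_⟩
  · exact fun i => MeasurableSet.iUnion (fun j => measurableSet_Ico)
  · intro i
    exact Set.iUnion_subset (fun j => PE_cell_subset hδ (hft ⟨i,j⟩))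
  · intro i i' hii'
    simp only [Function.onFun]
    rw [Set.disjoint_iUnion_left]
    intro j
    rw [Set.disjoint_iUnion_right]
    intro j'
    apply PE_cell_disjoint hδ
    intro hzz
    exact hii' (congrArg Sigma.fst (hfinj (Int.cast_injective (by exact_mod_cast hzz))))
  · intro i
    rw [measure_iUnion]
    · simp [tsum_fintype, Real.volume_Ico]
    · intro j j' hjj'
      apply PE_cell_disjoint hδ
      intro hzz
      apply hjj'
      have := hfinj (Int.cast_injective (by exact_mod_cast hzz))
      exact eq_of_heq (Sigma.mk.inj_iff.mp this).2
    · exact fun j => measurableSet_Ico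

lemma PE_cell_disjoint' {δ : ℝ} (hδ : 0 < δ) {z z' : ℤ} (h : z ≠ z') :
    Disjoint (Set.Ico ((z:ℝ)*δ) ((z:ℝ)*δ + δ)) (Set.Ico ((z':ℝ)*δ) ((z':ℝ)*δ + δ)) := by
  rw [Set.Ico_disjoint_Ico]
  rcases lt_or_gt_of_ne h with hlt | hlt
  · have h1 : (z:ℝ) + 1 ≤ (z':ℝ) := by exact_mod_cast hlt
    have : (z:ℝ)*δ + δ ≤ (z':ℝ)*δ := by nlinarith
    exact le_trans (min_le_left _ _) (le_trans this (le_max_right _ _))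
  · have h1 : (z':ℝ) + 1 ≤ (z:ℝ) := by exact_mod_cast hlt
    have : (z':ℝ)*δ + δ ≤ (z:ℝ)*δ := by nlinarith
    exact le_trans (min_le_right _ _) (le_trans this (le_max_left _ _))

lemma PE_card_bound {n : ℕ} (hn : n ≠ 0) (p q : Fin n → ℝ) (hpq : ∀ i, p i < q i)
    (m : Fin n → ℝ) (hm : ∀ i, 0 ≤ m i)
    (hall : ∀ S : Finset (Fin n),
      ∑ i ∈ S, m i ≤ (volume (⋃ i ∈ S, Set.Ico (p i) (q i))).toReal)
    (ε : ℝ) (hε : 0 < ε) (hε1 : ε < 1) :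
    ∃ δ : ℝ, 0 < δ ∧ ∀ S : Finset (Fin n),
      ∑ i ∈ S, ⌈(1-ε) * m i / δ⌉₊
        ≤ (S.biUnion (fun i => Finset.Ico ⌈p i/δ⌉ ⌊q i/δ⌋)).card := by
  classical
  haveI : NeZero n := ⟨hn⟩
  have hne : (Finset.univ : Finset (Fin n)).Nonempty := Finset.univ_nonempty
  set L := Finset.univ.inf' hne (fun i => q i - p i) with hLdef
  have hLle : ∀ i, L ≤ q i - p i := fun i => Finset.inf'_le _ (Finset.mem_univ i)
  have hL : 0 < L := by
    rw [hLdef, Finset.lt_inf'_iff]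
    intro i _
    linarith [hpq i]
  set δ := ε * L / (3*n+3) with hδdef
  have hn3 : (0:ℝ) < 3*n+3 := by positivity
  have hδ : 0 < δ := by positivity
  refine ⟨δ, hδ, ?_⟩
  intro S
  rcases S.eq_empty_or_nonempty with rfl | ⟨i0, hi0⟩
  · simp
  set U := S.biUnion (fun i => Finset.Ico ⌈p i/δ⌉ ⌊q i/δ⌋) with hU
  -- finiteness of the union measure
  have hVfin : volume (⋃ i ∈ S, Set.Ico (p i) (q i)) < ⊤ := by
    refine lt_of_le_of_lt (measure_biUnion_finset_le S _) ?_
    refine ENNReal.sum_lt_top.mpr (fun i _ => ?_)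
    simp [Real.volume_Ico]
  set V := (volume (⋃ i ∈ S, Set.Ico (p i) (q i))).toReal with hV
  have hV0 : 0 ≤ V := ENNReal.toReal_nonneg
  have hLV : L ≤ V := by
    have h1 : volume (Set.Ico (p i0) (q i0)) ≤ volume (⋃ i ∈ S, Set.Ico (p i) (q i)) :=
      measure_mono (by intro x hx; exact Set.mem_biUnion hi0 hx)
    have h2 := ENNReal.toReal_mono hVfin.ne h1
    rw [Real.volume_Ico, ENNReal.toReal_ofReal (by linarith [hpq i0])] at h2
    exact le_trans (hLle i0) h2
  -- cover
  have hcover : (⋃ i ∈ S, Set.Ico (p i) (q i)) ⊆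
      (⋃ z ∈ U, Set.Ico ((z:ℝ)*δ) ((z:ℝ)*δ + δ)) ∪
      ⋃ i ∈ S, (Set.Ico (p i) (p i + δ) ∪ Set.Ico (q i - δ) (q i)) := by
    intro x hx
    simp only [Set.mem_iUnion, exists_prop] at hx
    obtain ⟨i, hi, hxi⟩ := hx
    by_cases h1 : x < p i + δ
    · right
      simp only [Set.mem_iUnion, exists_prop]
      exact ⟨i, hi, Or.inl ⟨hxi.1, h1⟩⟩
    by_cases h2 : q i - δ ≤ x
    · right
      simp only [Set.mem_iUnion, exists_prop]
      exact ⟨i, hi, Or.inr ⟨h2, hxi.2⟩⟩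
    left
    push_neg at h1 h2
    simp only [Set.mem_iUnion, exists_prop]
    refine ⟨⌊x/δ⌋, ?_, ?_, ?_⟩
    · rw [hU, Finset.mem_biUnion]
      refine ⟨i, hi, Finset.mem_Ico.mpr ⟨?_, ?_⟩⟩
      · have h1' : p i / δ + 1 ≤ x/δ := by
          have h := (div_le_div_iff_of_pos_right hδ).mpr h1
          rwa [add_div, div_self (ne_of_gt hδ)] at h
        calc ⌈p i/δ⌉ ≤ ⌊p i/δ⌋ + 1 := Int.ceil_le_floor_add_one _
          _ = ⌊p i/δ + 1⌋ := (Int.floor_add_one _).symm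
          _ ≤ ⌊x/δ⌋ := Int.floor_mono h1'
      · have h2' : x/δ ≤ q i/δ - 1 := by
          have h := (div_le_div_iff_of_pos_right hδ).mpr h2.le
          rwa [sub_div, div_self (ne_of_gt hδ)] at h
        have h3 : ⌊x/δ⌋ ≤ ⌊q i/δ - (1:ℤ)⌋ := Int.floor_mono (by push_cast; linarith)
        rw [Int.floor_sub_intCast] at h3
        omega
    · calc (⌊x/δ⌋:ℝ) * δ ≤ x/δ * δ := by nlinarith [Int.floor_le (x/δ)]
        _ = x := by field_simp
    · have := Int.lt_floor_add_one (x/δ)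
      calc x = x/δ * δ := by field_simp
        _ < ((⌊x/δ⌋:ℝ) + 1) * δ := by nlinarith
        _ = (⌊x/δ⌋:ℝ)*δ + δ := by ring
  have hmeas1 : volume (⋃ z ∈ U, Set.Ico ((z:ℝ)*δ) ((z:ℝ)*δ + δ))
      = (U.card : ℝ≥0∞) * ENNReal.ofReal δ := by
    rw [measure_biUnion_finset (fun z _ z' _ hzz => PE_cell_disjoint' hδ hzz)
      (fun z _ => measurableSet_Ico)]
    have hc : ∀ z ∈ U, volume (Set.Ico ((z:ℝ)*δ) ((z:ℝ)*δ + δ)) = ENNReal.ofReal δ := by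
      intro z _
      rw [Real.volume_Ico]
      congr 1
      ring
    rw [Finset.sum_congr rfl hc, Finset.sum_const, nsmul_eq_mul]
  have hmeas2 : volume (⋃ i ∈ S, (Set.Ico (p i) (p i + δ) ∪ Set.Ico (q i - δ) (q i)))
      ≤ (S.card : ℝ≥0∞) * (2 * ENNReal.ofReal δ) := by
    refine le_trans (measure_biUnion_finset_le S _) ?_
    have hstrip : ∀ i ∈ S, volume (Set.Ico (p i) (p i + δ) ∪ Set.Ico (q i - δ) (q i))
        ≤ 2 * ENNReal.ofReal δ := by
      intro i _
      refine le_trans (measure_union_le _ _) ?_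
      rw [Real.volume_Ico, Real.volume_Ico, two_mul]
      have e1 : p i + δ - p i = δ := by ring
      have e2 : q i - (q i - δ) = δ := by ring
      rw [e1, e2]
    exact le_trans (Finset.sum_le_sum hstrip) (by rw [Finset.sum_const, nsmul_eq_mul])
  have hVbound : V ≤ δ * U.card + 2*δ*S.card := by
    have h' : volume (⋃ i ∈ S, Set.Ico (p i) (q i))
        ≤ (U.card : ℝ≥0∞) * ENNReal.ofReal δ + (S.card : ℝ≥0∞) * (2 * ENNReal.ofReal δ) := by
      refine le_trans (measure_mono hcover) (le_trans (measure_union_le _ _) ?_)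
      rw [hmeas1]
      exact add_le_add_right hmeas2 _
    have hRfin : ((U.card : ℝ≥0∞) * ENNReal.ofReal δ
        + (S.card : ℝ≥0∞) * (2 * ENNReal.ofReal δ)) ≠ ⊤ := by
      apply ENNReal.add_ne_top.mpr
      constructor
      · exact ENNReal.mul_ne_top (ENNReal.natCast_ne_top _) ENNReal.ofReal_ne_top
      · exact ENNReal.mul_ne_top (ENNReal.natCast_ne_top _)
          (ENNReal.mul_ne_top (by norm_num) ENNReal.ofReal_ne_top)
    have h2 := ENNReal.toReal_mono hRfin h'
    rw [ENNReal.toReal_add (ENNReal.mul_ne_top (ENNReal.natCast_ne_top _) ENNReal.ofReal_ne_top)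
        (ENNReal.mul_ne_top (ENNReal.natCast_ne_top _)
          (ENNReal.mul_ne_top (by norm_num) ENNReal.ofReal_ne_top)),
      ENNReal.toReal_mul, ENNReal.toReal_mul, ENNReal.toReal_mul] at h2
    simp only [ENNReal.toReal_natCast, ENNReal.toReal_ofReal hδ.le, ENNReal.toReal_ofNat] at h2
    rw [hV]
    linarith
  have hcard_n : (S.card : ℝ) ≤ (n:ℝ) := by
    have h : S.card ≤ n := by
      have h1 := Finset.card_le_univ S
      simpa using h1
    exact_mod_cast h
  have hδL : δ * (3*n+3) = ε * L := by
    rw [hδdef]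
    field_simp
  have hsum : (∑ i ∈ S, (⌈(1-ε) * m i / δ⌉₊ : ℝ)) * δ ≤ (1-ε) * V + δ * S.card := by
    have h1e : (0:ℝ) ≤ 1 - ε := by linarith
    have hper : ∀ i ∈ S, (⌈(1-ε) * m i / δ⌉₊ : ℝ) * δ ≤ (1-ε) * m i + δ := by
      intro i _
      have hy : 0 ≤ (1-ε) * m i / δ := div_nonneg (mul_nonneg h1e (hm i)) hδ.le
      have h2 : (⌈(1-ε) * m i / δ⌉₊ : ℝ) ≤ (1-ε) * m i / δ + 1 := (Nat.ceil_lt_add_one hy).le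
      have h3 : ((1-ε) * m i / δ + 1) * δ = (1-ε) * m i + δ := by field_simp
      nlinarith
    calc (∑ i ∈ S, (⌈(1-ε) * m i / δ⌉₊ : ℝ)) * δ
        = ∑ i ∈ S, (⌈(1-ε) * m i / δ⌉₊ : ℝ) * δ := by rw [Finset.sum_mul]
      _ ≤ ∑ i ∈ S, ((1-ε) * m i + δ) := Finset.sum_le_sum hper
      _ = (1-ε) * (∑ i ∈ S, m i) + δ * S.card := by
          rw [Finset.sum_add_distrib, ← Finset.mul_sum, Finset.sum_const, nsmul_eq_mul]
          ring
      _ ≤ (1-ε) * V + δ * S.card := by nlinarith [hall S]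
  have h3 : 3*δ*(S.card:ℝ) ≤ ε*V := by
    nlinarith [mul_nonneg hε.le (sub_nonneg.mpr hLV)]
  have hfinal : (∑ i ∈ S, (⌈(1-ε) * m i / δ⌉₊:ℝ)) ≤ (U.card : ℝ) := by
    have hmul : (∑ i ∈ S, (⌈(1-ε) * m i / δ⌉₊:ℝ)) * δ ≤ (U.card : ℝ) * δ := by nlinarith
    exact le_of_mul_le_mul_right hmul hδ
  have : (∑ i ∈ S, ⌈(1-ε) * m i / δ⌉₊ : ℝ) ≤ (U.card : ℝ) := by
    push_cast
    push_cast at hfinal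
    exact hfinal
  exact_mod_cast this

lemma PE_holder {A : Set ℝ} (s : ℝ → ℝ) (hs : Measurable s)
    (hs0 : ∀ t, 0 ≤ s t) {α : ℝ} (hα : 1 < α) {w : ℝ} (hw0 : 0 ≤ w)
    (hw : w ≤ ∫ t in A, s t)
    (hfin : ∫⁻ t in A, ENNReal.ofReal (s t ^ α) ≠ ⊤) (hAfin : volume A ≠ ⊤) :
    w ^ α ≤ (∫⁻ t in A, ENNReal.ofReal (s t ^ α)).toReal * (volume A).toReal ^ (α - 1) := by
  have hα0 : (0:ℝ) < α := by linarith
  set μ := volume.restrict A with hμ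
  set Iα := ∫⁻ t in A, ENNReal.ofReal (s t ^ α) with hIα
  have hconj : α.HolderConjugate (Real.conjExponent α) := Real.HolderConjugate.conjExponent hα
  have hint : ∫ t in A, s t = (∫⁻ t in A, ENNReal.ofReal (s t)).toReal := by
    rw [integral_eq_lintegral_of_nonneg_ae (Filter.Eventually.of_forall hs0)
      hs.aestronglyMeasurable]
  have hrpow : ∀ t, (ENNReal.ofReal (s t)) ^ α = ENNReal.ofReal (s t ^ α) := fun t =>
    ENNReal.ofReal_rpow_of_nonneg (hs0 t) hα0.le
  have hH := ENNReal.lintegral_mul_le_Lp_mul_Lq μ hconj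
    (hs.ennreal_ofReal.aemeasurable) (aemeasurable_const (b := (1:ℝ≥0∞)))
  simp only [Pi.mul_apply, mul_one, ENNReal.one_rpow, lintegral_const] at hH
  rw [Measure.restrict_apply_univ] at hH
  have hqpos : 0 < Real.conjExponent α := hconj.symm.pos
  have hHe : ∫⁻ t, ENNReal.ofReal (s t) ∂μ
      ≤ Iα ^ (1/α) * (volume A) ^ (1/Real.conjExponent α) := by
    refine le_trans hH ?_
    have : (∫⁻ t, ENNReal.ofReal (s t) ^ α ∂μ) = Iα := lintegral_congr (fun t => hrpow t)
    rw [this, one_mul]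
  have hRfin : Iα ^ (1/α) * (volume A) ^ (1/Real.conjExponent α) ≠ ⊤ := by
    apply ENNReal.mul_ne_top
    · exact ENNReal.rpow_ne_top_of_nonneg (by positivity) hfin
    · exact ENNReal.rpow_ne_top_of_nonneg (by positivity) hAfin
  have hw2 : w ≤ Iα.toReal ^ (1/α) * (volume A).toReal ^ (1/Real.conjExponent α) := by
    have h2 := ENNReal.toReal_mono hRfin hHe
    rw [ENNReal.toReal_mul, ← ENNReal.toReal_rpow, ← ENNReal.toReal_rpow] at h2
    calc w ≤ ∫ t in A, s t := hw
      _ = (∫⁻ t, ENNReal.ofReal (s t) ∂μ).toReal := hint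
      _ ≤ _ := h2
  have hIt : 0 ≤ Iα.toReal := ENNReal.toReal_nonneg
  have hVt : 0 ≤ (volume A).toReal := ENNReal.toReal_nonneg
  have hconj2 : (1/Real.conjExponent α) * α = α - 1 := by
    rw [Real.conjExponent]
    field_simp
  calc w ^ α ≤ (Iα.toReal ^ (1/α) * (volume A).toReal ^ (1/Real.conjExponent α)) ^ α := by
        exact Real.rpow_le_rpow hw0 hw2 hα0.le
    _ = Iα.toReal * (volume A).toReal ^ (α - 1) := by
        rw [Real.mul_rpow (by positivity) (by positivity),
          ← Real.rpow_mul hIt, ← Real.rpow_mul hVt, one_div_mul_cancel hα0.ne', hconj2,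
          Real.rpow_one]

lemma PE_construct {n : ℕ} {α : ℝ} (hα : 1 < α) (r d p q w : Fin n → ℝ) (η : ℝ) (hη : 0 ≤ η)
    (hw : ∀ i, 0 ≤ w i) (hpq : ∀ i, p i < q i)
    (hp : ∀ i, p i - η * (q i - p i) ≤ r i) (hq : ∀ i, d i ≤ q i + η * (q i - p i))
    {s : ℝ → ℝ} {σ : ℝ → Option (Fin n)}
    (hfeas : SSFeasible (⟨r, d, w⟩ : SSInstance (Fin n)) s σ)
    (hE : SSEnergy α s ≠ ⊤) {ε : ℝ} (hε : 0 < ε) (hε1 : ε < 1) :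
    SSOpt α (⟨p, q, w⟩ : SSInstance (Fin n))
      ≤ ENNReal.ofReal ((1-ε) ^ (1-α)) *
        (ENNReal.ofReal ((2*η+1) ^ (α-1)) * SSEnergy α s) := by
  classical
  have hα0 : (0:ℝ) < α := by linarith
  obtain ⟨hsm, hσm, hs0, hjob⟩ := hfeas
  rcases Nat.eq_zero_or_pos n with hn0 | hn0
  · subst hn0
    have hfeas0 : SSFeasible (⟨p, q, w⟩ : SSInstance (Fin 0)) (fun _ => 0) (fun _ => none) :=
      ⟨measurable_const, measurable_const, fun t => le_refl 0, fun i => i.elim0⟩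
    have h1 : SSOpt α (⟨p, q, w⟩ : SSInstance (Fin 0)) ≤ SSEnergy α (fun _ => 0) :=
      sInf_le ⟨_, _, hfeas0, rfl⟩
    have h2 : SSEnergy α (fun _ => (0:ℝ)) = 0 := by
      simp [SSEnergy, Real.zero_rpow (ne_of_gt hα0)]
    rw [h2] at h1
    exact le_trans h1 zero_le
  have hn : n ≠ 0 := by omega
  set c : ℝ := 2*η+1 with hcdef
  have hc : (0:ℝ) < c := by simp [hcdef]; linarith
  set A : Fin n → Set ℝ := fun i => {t | σ t = some i} with hAdef
  have hAm : ∀ i, MeasurableSet (A i) := by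
    intro i
    have : A i = σ ⁻¹' {some i} := rfl
    rw [this]
    exact hσm MeasurableSpace.measurableSet_top
  have hAd : Pairwise (Function.onFun Disjoint A) := by
    intro i j hij
    simp only [Function.onFun]
    rw [Set.disjoint_left]
    intro t hti htj
    exact hij (by simpa [hAdef] using hti.symm.trans (htj : σ t = some j))
  have hAsub : ∀ i, A i ⊆ Set.Ico (r i) (d i) := fun i => (hjob i).1
  have hAfin : ∀ i, volume (A i) ≠ ⊤ := by
    intro i
    refine ne_top_of_le_ne_top ?_ (measure_mono (hAsub i))
    simp [Real.volume_Ico]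
  have hIαfin : ∀ i, ∫⁻ t in A i, ENNReal.ofReal (s t ^ α) ≠ ⊤ := by
    intro i
    exact ne_top_of_le_ne_top hE (setLIntegral_le_lintegral _ _)
  set m : Fin n → ℝ := fun i => if 0 < w i then (volume (A i)).toReal / c else 0 with hmdef
  have hm0 : ∀ i, 0 ≤ m i := by
    intro i
    simp only [hmdef]
    split
    · positivity
    · exact le_refl 0
  have hall : ∀ S : Finset (Fin n),
      ∑ i ∈ S, m i ≤ (volume (⋃ i ∈ S, Set.Ico (p i) (q i))).toReal := by
    intro S
    have hfinU : volume (⋃ i ∈ S, Set.Ico (p i) (q i)) ≠ ⊤ := by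
      refine ne_of_lt (lt_of_le_of_lt (measure_biUnion_finset_le S _) ?_)
      refine ENNReal.sum_lt_top.mpr (fun i _ => ?_)
      simp [Real.volume_Ico]
    have h1 : ∑ i ∈ S, m i ≤ ∑ i ∈ S, (volume (A i)).toReal / c := by
      refine Finset.sum_le_sum (fun i _ => ?_)
      simp only [hmdef]
      split
      · exact le_refl _
      · positivity
    have h2 : (∑ i ∈ S, (volume (A i)).toReal) = (volume (⋃ i ∈ S, A i)).toReal := by
      rw [measure_biUnion_finset (fun i _ j _ hij => hAd hij) (fun i _ => hAm i)]
      rw [ENNReal.toReal_sum (fun i _ => hAfin i)]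
    have h3 : volume (⋃ i ∈ S, A i)
        ≤ volume (⋃ i ∈ S, Set.Ico (p i - η*(q i - p i)) (q i + η*(q i - p i))) := by
      refine measure_mono (Set.iUnion₂_mono (fun i _ => ?_))
      exact (hAsub i).trans (Set.Ico_subset_Ico (hp i) (hq i))
    have h4 := PE_expand_bound η hη S.card S p q le_rfl (fun i _ => (hpq i).le)
    have hRfin : ENNReal.ofReal (1+2*η) * volume (⋃ i ∈ S, Set.Ico (p i) (q i)) ≠ ⊤ :=
      ENNReal.mul_ne_top ENNReal.ofReal_ne_top hfinU
    have h5 := ENNReal.toReal_mono hRfin (le_trans h3 h4)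
    rw [ENNReal.toReal_mul, ENNReal.toReal_ofReal (by linarith)] at h5
    have h6 : (∑ i ∈ S, (volume (A i)).toReal / c)
        ≤ (volume (⋃ i ∈ S, Set.Ico (p i) (q i))).toReal := by
      rw [← Finset.sum_div, h2, div_le_iff₀ hc]
      calc (volume (⋃ i ∈ S, A i)).toReal
          ≤ (1+2*η) * (volume (⋃ i ∈ S, Set.Ico (p i) (q i))).toReal := h5
        _ = (volume (⋃ i ∈ S, Set.Ico (p i) (q i))).toReal * c := by rw [hcdef]; ring
    exact le_trans h1 h6
  obtain ⟨δ, hδ, hhall⟩ := PE_card_bound hn p q hpq m hm0 hall ε hε hε1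
  set k : Fin n → ℕ := fun i => ⌈(1-ε) * m i / δ⌉₊ with hkdef
  obtain ⟨B, hBm, hBsub, hBdisj, hBvol⟩ := PE_cells_pack p q δ hδ k (hhall)
  have hBvolR : ∀ i, (volume (B i)).toReal = (k i : ℝ) * δ := by
    intro i
    rw [hBvol i, ENNReal.toReal_mul, ENNReal.toReal_natCast, ENNReal.toReal_ofReal hδ.le]
  have hBfin : ∀ i, volume (B i) ≠ ⊤ := by
    intro i
    rw [hBvol i]
    exact ENNReal.mul_ne_top (ENNReal.natCast_ne_top _) ENNReal.ofReal_ne_top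
  have hkδ : ∀ i, (1-ε) * m i ≤ (k i : ℝ) * δ := by
    intro i
    have := Nat.le_ceil ((1-ε) * m i / δ)
    calc (1-ε) * m i = ((1-ε) * m i / δ) * δ := by field_simp
      _ ≤ (k i : ℝ) * δ := by
        apply mul_le_mul_of_nonneg_right _ hδ.le
        exact this
  set v : Fin n → ℝ := fun i => w i / ((k i : ℝ) * δ) with hvdef
  have hv0 : ∀ i, 0 ≤ v i := fun i => div_nonneg (hw i) (by positivity)
  have hwle : ∀ i, w i ≤ ∫ t in A i, s t := fun i => (hjob i).2
  have hApos : ∀ i, 0 < w i → 0 < (volume (A i)).toReal := by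
    intro i hwi
    rcases eq_or_ne (volume (A i)) 0 with h0 | h0
    · exfalso
      have : ∫ t in A i, s t = 0 := by
        rw [Measure.restrict_eq_zero.mpr h0, integral_zero_measure]
      linarith [hwle i]
    · exact ENNReal.toReal_pos h0 (hAfin i)
  have hmpos : ∀ i, 0 < w i → 0 < m i := by
    intro i hwi
    have := hApos i hwi
    simp only [hmdef, if_pos hwi]
    positivity
  have hkpos : ∀ i, 0 < w i → 0 < (k i : ℝ) * δ := by
    intro i hwi
    have h1 : 0 < (1-ε) * m i := by nlinarith [hmpos i hwi]
    linarith [hkδ i]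
  set s' : ℝ → ℝ := fun t => ∑ i, Set.indicator (B i) (fun _ => v i) t with hs'def
  have hs'm : Measurable s' :=
    Finset.measurable_sum _ (fun i _ => measurable_const.indicator (hBm i))
  have hs'0 : ∀ t, 0 ≤ s' t := fun t =>
    Finset.sum_nonneg (fun i _ => Set.indicator_nonneg (fun _ _ => hv0 i) t)
  have hcollapse : ∀ i, ∀ t ∈ B i, s' t = v i := by
    intro i t ht
    simp only [hs'def]
    rw [Finset.sum_eq_single i]
    · exact Set.indicator_of_mem ht _
    · intro j _ hji
      exact Set.indicator_of_notMem
        (fun hbj => Set.disjoint_left.mp (hBdisj hji) hbj ht) _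
    · intro h
      exact absurd (Finset.mem_univ i) h
  set σ' : ℝ → Option (Fin n) := fun t => if h : ∃ i, t ∈ B i then some h.choose else none
    with hσ'def
  have hσ'some : ∀ i t, σ' t = some i ↔ t ∈ B i := by
    intro i t
    constructor
    · intro h
      rcases Classical.em (∃ j, t ∈ B j) with he | he
      · rw [hσ'def] at h
        simp only [dif_pos he] at h
        have hcs := he.choose_spec
        have : he.choose = i := by exact Option.some.inj h
        rwa [this] at hcs
      · rw [hσ'def] at h
        simp only [dif_neg he] at h
        exact (Option.some_ne_none _ h.symm).elim
    · intro ht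
      have he : ∃ j, t ∈ B j := ⟨i, ht⟩
      rw [hσ'def]
      simp only [dif_pos he, Option.some.injEq]
      by_contra hci
      exact Set.disjoint_left.mp (hBdisj hci) he.choose_spec ht
  have hσ'm : Measurable σ' := by
    apply measurable_to_countable'
    intro y
    match y with
    | some i =>
      have : σ' ⁻¹' {some i} = B i := by
        ext t
        simp only [Set.mem_preimage, Set.mem_singleton_iff]
        exact hσ'some i t
      rw [this]
      exact hBm i
    | none =>
      have : σ' ⁻¹' {none} = (⋃ i, B i)ᶜ := by
        ext t
        simp only [Set.mem_preimage, Set.mem_singleton_iff, Set.mem_compl_iff, Set.mem_iUnion]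
        rw [hσ'def]
        constructor
        · intro h hex
          simp only [dif_pos hex] at h
          exact Option.some_ne_none _ h
        · intro h
          simp only [dif_neg h]
      rw [this]
      exact (MeasurableSet.iUnion (fun i => hBm i)).compl
  have hset : ∀ i, {t | σ' t = some i} = B i := by
    intro i
    ext t
    exact hσ'some i t
  have hfeas' : SSFeasible (⟨p, q, w⟩ : SSInstance (Fin n)) s' σ' := by
    refine ⟨hs'm, hσ'm, hs'0, fun i => ⟨?_, ?_⟩⟩
    · rw [hset i]
      exact hBsub i
    · rw [hset i]
      have hic : ∫ t in B i, s' t = ∫ t in B i, v i :=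
        setIntegral_congr_fun (hBm i) (fun t ht => hcollapse i t ht)
      rw [hic, setIntegral_const, smul_eq_mul]
      show w i ≤ (volume (B i)).toReal * v i
      by_cases hwi : 0 < w i
      · rw [hBvolR i, hvdef]
        rw [mul_div_cancel₀ _ (ne_of_gt (hkpos i hwi))]
      · have hw0 : w i = 0 := le_antisymm (not_lt.mp hwi) (hw i)
        rw [hw0]
        positivity
  have henergy : SSEnergy α s' = ∑ i, ENNReal.ofReal (v i ^ α) * volume (B i) := by
    have hpt : ∀ t, ENNReal.ofReal (s' t ^ α)
        = ∑ i, Set.indicator (B i) (fun _ => ENNReal.ofReal (v i ^ α)) t := by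
      intro t
      by_cases h : ∃ i, t ∈ B i
      · obtain ⟨i, hi⟩ := h
        rw [Finset.sum_eq_single i]
        · rw [Set.indicator_of_mem hi, hcollapse i t hi]
        · intro j _ hji
          exact Set.indicator_of_notMem
            (fun hbj => Set.disjoint_left.mp (hBdisj hji) hbj hi) _
        · intro h
          exact absurd (Finset.mem_univ i) h
      · push_neg at h
        have h0 : s' t = 0 :=
          Finset.sum_eq_zero (fun j _ => Set.indicator_of_notMem (h j) _)
        rw [h0, Real.zero_rpow (ne_of_gt hα0), ENNReal.ofReal_zero]
        exact (Finset.sum_eq_zero (fun j _ => Set.indicator_of_notMem (h j) _)).symm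
    rw [SSEnergy, lintegral_congr hpt,
      lintegral_finset_sum _ (fun i _ => measurable_const.indicator (hBm i))]
    exact Finset.sum_congr rfl (fun i _ => lintegral_indicator_const (hBm i) _)
  set coeff : ℝ≥0∞ := ENNReal.ofReal ((1-ε)^(1-α) * c^(α-1)) with hcoeff
  have hterm : ∀ i, ENNReal.ofReal (v i ^ α) * volume (B i)
      ≤ coeff * (∫⁻ t in A i, ENNReal.ofReal (s t ^ α)) := by
    intro i
    by_cases hwi : 0 < w i
    swap
    · have hw0 : w i = 0 := le_antisymm (not_lt.mp hwi) (hw i)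
      have : v i = 0 := by rw [hvdef]; simp [hw0]
      rw [this, Real.zero_rpow (ne_of_gt hα0), ENNReal.ofReal_zero, zero_mul]
      exact zero_le
    · set K : ℝ := (k i : ℝ) * δ with hK
      have hKpos : 0 < K := hkpos i hwi
      set VA : ℝ := (volume (A i)).toReal with hVA
      have hVApos : 0 < VA := hApos i hwi
      set IR : ℝ := (∫⁻ t in A i, ENNReal.ofReal (s t ^ α)).toReal with hIR
      have hIR0 : 0 ≤ IR := ENNReal.toReal_nonneg
      have hmi : m i = VA / c := by simp only [hmdef, if_pos hwi]; rfl
      have hvolB : volume (B i) = ENNReal.ofReal K := by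
        rw [hBvol i, hK, ENNReal.ofReal_mul (by positivity), ENNReal.ofReal_natCast]
      -- real-number core inequality
      have hhold : w i ^ α ≤ IR * VA ^ (α-1) :=
        PE_holder s hsm hs0 hα (hw i) (hwle i) (hIαfin i) (hAfin i)
      have step1 : K * v i ^ α = w i ^ α * K ^ (1-α) := by
        rw [hvdef]
        rw [Real.div_rpow (hw i) (by positivity)]
        rw [show (1:ℝ)-α = 1 + (-α) by ring, Real.rpow_add hKpos, Real.rpow_one,
          Real.rpow_neg hKpos.le]
        field_simp
        rw [← hK]; exact mul_inv_cancel₀ (by positivity)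
      have step2 : K ^ (1-α) ≤ (1-ε)^(1-α) * (VA^(1-α) * c^(α-1)) := by
        have h1 : 0 < (1-ε) * m i := by nlinarith [hmpos i hwi]
        have h2 : K ^ (1-α) ≤ ((1-ε) * m i) ^ (1-α) :=
          Real.rpow_le_rpow_of_nonpos h1 (hkδ i) (by linarith)
        have h3 : ((1-ε) * m i) ^ (1-α) = (1-ε)^(1-α) * (m i)^(1-α) :=
          Real.mul_rpow (by linarith) (le_of_lt (hmpos i hwi))
        have h4 : (m i)^(1-α) = VA^(1-α) * c^(α-1) := by
          rw [hmi, Real.div_rpow hVApos.le hc.le]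
          rw [show (α:ℝ)-1 = -(1-α) by ring, Real.rpow_neg hc.le]
          rw [div_eq_mul_inv]
        rw [h3, h4] at h2
        exact h2
      have step3 : w i ^ α * VA ^ (1-α) ≤ IR := by
        have h5 : VA ^ (α-1) * VA ^ (1-α) = 1 := by
          rw [← Real.rpow_add hVApos]
          norm_num
        calc w i ^ α * VA ^ (1-α) ≤ (IR * VA ^ (α-1)) * VA ^ (1-α) := by
              apply mul_le_mul_of_nonneg_right hhold (by positivity)
          _ = IR * (VA ^ (α-1) * VA ^ (1-α)) := by ring
          _ = IR := by rw [h5, mul_one]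
      have hreal : v i ^ α * K ≤ (1-ε)^(1-α) * c^(α-1) * IR := by
        have hwα : 0 ≤ w i ^ α := by positivity
        have hc1 : (0:ℝ) ≤ (1-ε)^(1-α) * c^(α-1) :=
          mul_nonneg (Real.rpow_nonneg (by linarith) _) (Real.rpow_nonneg hc.le _)
        calc v i ^ α * K = w i ^ α * K ^ (1-α) := by rw [← step1]; ring
          _ ≤ w i ^ α * ((1-ε)^(1-α) * (VA^(1-α) * c^(α-1))) :=
              mul_le_mul_of_nonneg_left step2 hwα
          _ = ((1-ε)^(1-α) * c^(α-1)) * (w i ^ α * VA^(1-α)) := by ring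
          _ ≤ ((1-ε)^(1-α) * c^(α-1)) * IR := mul_le_mul_of_nonneg_left step3 hc1
      calc ENNReal.ofReal (v i ^ α) * volume (B i)
          = ENNReal.ofReal (v i ^ α * K) := by
            rw [hvolB, ← ENNReal.ofReal_mul (by positivity)]
        _ ≤ ENNReal.ofReal ((1-ε)^(1-α) * c^(α-1) * IR) := ENNReal.ofReal_le_ofReal hreal
        _ = coeff * ENNReal.ofReal IR := by
            rw [hcoeff, ← ENNReal.ofReal_mul
              (mul_nonneg (Real.rpow_nonneg (by linarith) _) (Real.rpow_nonneg hc.le _))]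
        _ = coeff * (∫⁻ t in A i, ENNReal.ofReal (s t ^ α)) := by
            rw [hIR, ENNReal.ofReal_toReal (hIαfin i)]
  have hsumA : ∑ i, (∫⁻ t in A i, ENNReal.ofReal (s t ^ α)) ≤ SSEnergy α s := by
    have h1 : (∑ i, ∫⁻ t in A i, ENNReal.ofReal (s t ^ α))
        = ∫⁻ t in ⋃ i, A i, ENNReal.ofReal (s t ^ α) := by
      rw [lintegral_iUnion (fun i => hAm i) hAd, tsum_fintype]
    rw [h1, SSEnergy]
    exact setLIntegral_le_lintegral _ _
  calc SSOpt α (⟨p, q, w⟩ : SSInstance (Fin n)) ≤ SSEnergy α s' :=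
        sInf_le ⟨s', σ', hfeas', rfl⟩
    _ = ∑ i, ENNReal.ofReal (v i ^ α) * volume (B i) := henergy
    _ ≤ ∑ i, coeff * (∫⁻ t in A i, ENNReal.ofReal (s t ^ α)) :=
        Finset.sum_le_sum (fun i _ => hterm i)
    _ = coeff * ∑ i, (∫⁻ t in A i, ENNReal.ofReal (s t ^ α)) := by rw [Finset.mul_sum]
    _ ≤ coeff * SSEnergy α s := mul_le_mul_right hsumA _
    _ = ENNReal.ofReal ((1-ε)^(1-α)) * (ENNReal.ofReal ((2*η+1)^(α-1)) * SSEnergy α s) := by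
        rw [hcoeff, ENNReal.ofReal_mul (Real.rpow_nonneg (by linarith) _), mul_assoc]


/-- **Lemma `PredictionError`.** If the predicted release times and deadlines differ
from the actual ones by at most `η` times the predicted interval length, then the
optimal energy of the predicted instance `J_PQ` is at most `(2η+1)^(α-1)` times that
of the actual instance `J_RD`. -/
theorem prediction_error (α : ℝ) (hα : 1 < α) (n : ℕ)
    (r d p q w : Fin n → ℝ) (η : ℝ) (hη : 0 ≤ η)
    (hw : ∀ i, 0 ≤ w i) (hrd : ∀ i, r i < d i) (hpq : ∀ i, p i < q i)
    (hp : ∀ i, |p i - r i| ≤ η * (q i - p i))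
    (hq : ∀ i, |q i - d i| ≤ η * (q i - p i)) :
    SSOpt α (⟨p, q, w⟩ : SSInstance (Fin n))
      ≤ ENNReal.ofReal ((2 * η + 1) ^ (α - 1)) *
        SSOpt α (⟨r, d, w⟩ : SSInstance (Fin n)) := by
  classical
  have hc : (0:ℝ) < 2*η+1 := by linarith
  have hcoef0 : ENNReal.ofReal ((2*η+1)^(α-1)) ≠ 0 := by
    rw [ne_eq, ENNReal.ofReal_eq_zero, not_le]
    exact Real.rpow_pos_of_pos hc _
  have hcoefT : ENNReal.ofReal ((2*η+1)^(α-1)) ≠ ⊤ := ENNReal.ofReal_ne_top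
  have hp' : ∀ i, p i - η*(q i - p i) ≤ r i := by
    intro i
    have h := abs_le.mp (hp i)
    linarith [h.1, h.2]
  have hq' : ∀ i, d i ≤ q i + η*(q i - p i) := by
    intro i
    have h := abs_le.mp (hq i)
    linarith [h.1, h.2]
  have key : ∀ E ∈ {E | ∃ s σ, SSFeasible (⟨r, d, w⟩ : SSInstance (Fin n)) s σ
        ∧ E = SSEnergy α s},
      SSOpt α (⟨p, q, w⟩ : SSInstance (Fin n)) ≤ ENNReal.ofReal ((2*η+1)^(α-1)) * E := by
    rintro E ⟨s, σ, hfeas, rfl⟩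
    rcases eq_or_ne (SSEnergy α s) ⊤ with hE | hE
    · rw [hE, ENNReal.mul_top hcoef0]
      exact le_top
    apply PE_le_of_forall_mul
    intro x hx
    set ε : ℝ := 1 - x^(1/(1-α)) with hεdef
    have hxpos : (0:ℝ) < x := by linarith
    have h1 : 0 < x^(1/(1-α)) := Real.rpow_pos_of_pos hxpos _
    have h2 : x^(1/(1-α)) < 1 :=
      Real.rpow_lt_one_of_one_lt_of_neg hx (one_div_neg.mpr (by linarith))
    have hε : 0 < ε := by rw [hεdef]; linarith
    have hε1 : ε < 1 := by rw [hεdef]; linarith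
    have hrw : (1-ε)^(1-α) = x := by
      rw [hεdef, sub_sub_cancel, ← Real.rpow_mul hxpos.le,
        one_div_mul_cancel (ne_of_lt (by linarith : (1:ℝ)-α < 0)), Real.rpow_one]
    have hcon := PE_construct hα r d p q w η hη hw hpq hp' hq' hfeas hE hε hε1
    rwa [hrw] at hcon
  by_contra hcon
  push_neg at hcon
  have hSne : {E | ∃ s σ, SSFeasible (⟨r, d, w⟩ : SSInstance (Fin n)) s σ
      ∧ E = SSEnergy α s}.Nonempty := by
    by_contra hemp
    rw [Set.not_nonempty_iff_eq_empty] at hemp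
    have hb : SSOpt α (⟨r, d, w⟩ : SSInstance (Fin n)) = ⊤ := by
      rw [SSOpt, hemp, sInf_empty]
    rw [hb, ENNReal.mul_top hcoef0] at hcon
    exact not_top_lt hcon
  have hblt : SSOpt α (⟨r, d, w⟩ : SSInstance (Fin n))
      < SSOpt α (⟨p, q, w⟩ : SSInstance (Fin n)) / ENNReal.ofReal ((2*η+1)^(α-1)) := by
    rw [ENNReal.lt_div_iff_mul_lt (Or.inl hcoef0) (Or.inl hcoefT), mul_comm]
    exact hcon
  rw [SSOpt] at hblt
  obtain ⟨E, hES, hElt⟩ := sInf_lt_iff.mp hblt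
  have h1 : ENNReal.ofReal ((2*η+1)^(α-1)) * E
      < ENNReal.ofReal ((2*η+1)^(α-1)) *
        (SSOpt α (⟨p, q, w⟩ : SSInstance (Fin n)) / ENNReal.ofReal ((2*η+1)^(α-1))) :=
    (ENNReal.mul_lt_mul_iff_right hcoef0 hcoefT).mpr hElt
  have h2 : ENNReal.ofReal ((2*η+1)^(α-1)) *
      (SSOpt α (⟨p, q, w⟩ : SSInstance (Fin n)) / ENNReal.ofReal ((2*η+1)^(α-1)))
      ≤ SSOpt α (⟨p, q, w⟩ : SSInstance (Fin n)) := ENNReal.mul_div_le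
  exact lt_irrefl _ (lt_of_le_of_lt (key E hES) (lt_of_lt_of_le h1 h2))
end

section
/- Energy of the predicted instance versus the actual instance for common deadlines (Corollary 'CD_PredictionError'): Let η ≥ 0. Consider n jobs with workloads w_i ≥ 0 that share a common deadline d, with actual release times r_i < d and predicted release times p_i < d such that |p_i − r_i| ≤ η·(d − p_i) for every i. Let J_P be the instance in which job i has interval [p_i, d) and workload w_i, and J_R the instance in which job i has interval [r_i, d) and workload w_i. Then OPT(J_P) ≤ (1 + η)^(α−1) · OPT(J_R). -/
open MeasureTheory
open scoped ENNReal

lemma map_affine_volume (a b : ℝ) (ha : a ≠ 0) :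
    Measure.map (fun t : ℝ => a * t + b) volume = ENNReal.ofReal |a⁻¹| • volume := by
  have h : (fun t : ℝ => a * t + b) = (fun x : ℝ => x + b) ∘ (fun t : ℝ => a * t) := rfl
  rw [h, ← Measure.map_map (measurable_add_const b) (measurable_const_mul a),
    Real.map_volume_mul_left ha, Measure.map_smul, MeasureTheory.map_add_right_eq_self]

lemma lintegral_affine {f : ℝ → ENNReal} (hf : Measurable f) (a b : ℝ) (ha : a ≠ 0) :
    ∫⁻ t, f (a * t + b) = ENNReal.ofReal |a⁻¹| * ∫⁻ t, f t := by
  rw [← lintegral_map hf ((measurable_const_mul a).add_const b), map_affine_volume a b ha,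
    lintegral_smul_measure, smul_eq_mul]

lemma integral_affine {f : ℝ → ℝ} (hf : Measurable f) (a b : ℝ) (ha : a ≠ 0) :
    ∫ t, f (a * t + b) = |a⁻¹| * ∫ t, f t := by
  have h1 : ∫ t, f (a * t + b) = ∫ y, f y ∂(Measure.map (fun t : ℝ => a * t + b) volume) := by
    rw [integral_map ((measurable_const_mul a).add_const b).aemeasurable
      (by rw [map_affine_volume a b ha]; exact hf.aestronglyMeasurable.smul_measure _)]
  rw [h1, map_affine_volume a b ha, integral_smul_measure, ENNReal.toReal_ofReal (abs_nonneg _),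
    smul_eq_mul]

/-- **Corollary `CD_PredictionError`.** For common-deadline instances: if the predicted
release times differ from the actual ones by at most `η` times the predicted interval
length, the optimal energy of the predicted instance `J_P` is at most `(1+η)^(α-1)`
times that of the actual instance `J_R`. -/
theorem cd_prediction_error (α : ℝ) (hα : 1 < α) (n : ℕ)
    (r p w : Fin n → ℝ) (d : ℝ) (η : ℝ) (hη : 0 ≤ η)
    (hw : ∀ i, 0 ≤ w i) (hrd : ∀ i, r i < d) (hpd : ∀ i, p i < d)
    (hp : ∀ i, |p i - r i| ≤ η * (d - p i)) :
    SSOpt α (⟨p, fun _ => d, w⟩ : SSInstance (Fin n))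
      ≤ ENNReal.ofReal ((1 + η) ^ (α - 1)) *
        SSOpt α (⟨r, fun _ => d, w⟩ : SSInstance (Fin n)) := by
  set a : ℝ := 1 + η with hadef
  have ha0 : 0 < a := by simp only [hadef]; linarith
  have hane : a ≠ 0 := ne_of_gt ha0
  set c : ℝ≥0∞ := ENNReal.ofReal (a ^ (α - 1)) with hcdef
  have hc0 : c ≠ 0 := by
    simp only [hcdef, ne_eq, ENNReal.ofReal_eq_zero, not_le]
    exact Real.rpow_pos_of_pos ha0 _
  have hctop : c ≠ ⊤ := ENNReal.ofReal_ne_top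
  -- key step: each feasible schedule for J_R yields a feasible schedule for J_P
  have key : ∀ E ∈ {E | ∃ s σ, SSFeasible (⟨r, fun _ => d, w⟩ : SSInstance (Fin n)) s σ ∧
      E = SSEnergy α s},
      SSOpt α (⟨p, fun _ => d, w⟩ : SSInstance (Fin n)) ≤ c * E := by
    rintro E ⟨s, σ, ⟨hs, hσ, hpos, hjobs⟩, rfl⟩
    set g : ℝ → ℝ := fun t => a * t + (-(η * d)) with hgdef
    have hg : Measurable g := (measurable_const_mul a).add_const _
    set s' : ℝ → ℝ := fun t => a * s (g t) with hs'def
    set σ' : ℝ → Option (Fin n) := fun t => σ (g t) with hσ'def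
    have hfeas : SSFeasible (⟨p, fun _ => d, w⟩ : SSInstance (Fin n)) s' σ' := by
      refine ⟨(hs.comp hg).const_mul a, hσ.comp hg, fun t => mul_nonneg ha0.le (hpos _), fun i => ?_⟩
      constructor
      · intro t ht
        have hmem : g t ∈ Set.Ico (r i) d := (hjobs i).1 ht
        obtain ⟨h1, h2⟩ := hmem
        have habs := (abs_le.mp (hp i)).2
        simp only [hgdef, hadef] at h1 h2
        constructor
        · -- p i ≤ t
          have h3 : (1 + η) * p i ≤ (1 + η) * t := by nlinarith
          exact le_of_mul_le_mul_left h3 (by linarith)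
        · -- t < d
          nlinarith
      · -- workload
        set A : Set ℝ := {t | σ t = some i} with hAdef
        have hA : MeasurableSet A := hσ (MeasurableSpace.measurableSet_top (s := {some i}))
        have hpre : {t | σ' t = some i} = g ⁻¹' A := rfl
        have hindm : Measurable (A.indicator s) := hs.indicator hA
        have heq : ∀ t, (g ⁻¹' A).indicator s' t = a * (A.indicator s) (g t) := by
          intro t
          by_cases h : g t ∈ A
          · rw [Set.indicator_of_mem h, Set.indicator_of_mem (by exact h)]
          · rw [Set.indicator_of_notMem h, Set.indicator_of_notMem (by exact h), mul_zero]
        calc w i ≤ ∫ t in A, s t := (hjobs i).2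
          _ = ∫ t, A.indicator s t := (integral_indicator hA).symm
          _ = a * (a⁻¹ * ∫ t, A.indicator s t) := by
              field_simp
          _ = a * (|a⁻¹| * ∫ t, A.indicator s t) := by
              rw [abs_of_pos (inv_pos.mpr ha0)]
          _ = a * ∫ t, (A.indicator s) (a * t + (-(η * d))) := by
              rw [integral_affine hindm a _ hane]
          _ = ∫ t, a * (A.indicator s) (g t) := by
              rw [← integral_const_mul]
          _ = ∫ t, (g ⁻¹' A).indicator s' t := by
              simp_rw [heq]
          _ = ∫ t in g ⁻¹' A, s' t := integral_indicator (hg hA)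
          _ = ∫ t in {t | σ' t = some i}, s' t := by rw [hpre]
    -- energy computation
    have hE : SSEnergy α s' = c * SSEnergy α s := by
      have hF : Measurable fun u => ENNReal.ofReal (s u ^ α) :=
        ((Real.continuous_rpow_const (by linarith : (0:ℝ) ≤ α)).measurable.comp
          hs).ennreal_ofReal
      have h1 : ∀ t, ENNReal.ofReal (s' t ^ α)
          = ENNReal.ofReal (a ^ α) * ENNReal.ofReal (s (g t) ^ α) := by
        intro t
        rw [hs'def]
        rw [Real.mul_rpow ha0.le (hpos _), ENNReal.ofReal_mul (Real.rpow_nonneg ha0.le _)]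
      calc SSEnergy α s' = ∫⁻ t, ENNReal.ofReal (a ^ α) * ENNReal.ofReal (s (g t) ^ α) := by
            unfold SSEnergy; simp_rw [h1]
        _ = ENNReal.ofReal (a ^ α) * ∫⁻ t, ENNReal.ofReal (s (g t) ^ α) :=
            lintegral_const_mul _ (hF.comp hg)
        _ = ENNReal.ofReal (a ^ α) * (ENNReal.ofReal |a⁻¹| *
              ∫⁻ t, ENNReal.ofReal (s t ^ α)) := by
            rw [← lintegral_affine hF a (-(η * d)) hane]
        _ = c * SSEnergy α s := by
            rw [← mul_assoc]
            congr 1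
            rw [hcdef, abs_of_pos (inv_pos.mpr ha0),
              ← ENNReal.ofReal_mul (Real.rpow_nonneg ha0.le _)]
            congr 1
            rw [Real.rpow_sub ha0, Real.rpow_one, div_eq_mul_inv]
    calc SSOpt α (⟨p, fun _ => d, w⟩ : SSInstance (Fin n)) ≤ SSEnergy α s' :=
          sInf_le ⟨s', σ', hfeas, rfl⟩
      _ = c * SSEnergy α s := hE
  -- conclude
  rw [show SSOpt α (⟨r, fun _ => d, w⟩ : SSInstance (Fin n))
      = sInf {E | ∃ s σ, SSFeasible (⟨r, fun _ => d, w⟩ : SSInstance (Fin n)) s σ ∧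
          E = SSEnergy α s} from rfl,
    mul_comm, ← ENNReal.div_le_iff_le_mul (Or.inl hc0) (Or.inl hctop)]
  refine le_sInf fun E hE => ?_
  rw [ENNReal.div_le_iff_le_mul (Or.inl hc0) (Or.inl hctop), mul_comm]
  exact key E hE
end

section
/- Combining feasible schedules (Lemma 'merge'): Let J be a speed-scaling instance whose job index set is partitioned into m parts J_1, …, J_m, and for each k ∈ {1, …, m} let (s_k, σ_k) be a feasible schedule for the sub-instance consisting of the jobs of J_k (with their release times, deadlines and workloads from J), with energy E_k = ∫ (s_k t)^α dt. Then there exists a feasible schedule for the full instance J whose speed function is s(t) = Σ_{k=1}^m s_k(t), and its energy satisfies ∫ (Σ_{k=1}^m s_k t)^α dt ≤ m^(α−1) · Σ_{k=1}^m E_k. -/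
open MeasureTheory
open scoped ENNReal

section MergeHelpers
open Set

private lemma sier (μ : Measure ℝ) [SigmaFinite μ] [NullSingletonClass μ] {E : Set ℝ}
    (hE : MeasurableSet E) {r : ℝ≥0∞} (hr : r ≤ μ E) (hrtop : r ≠ ∞) :
    ∃ F, F ⊆ E ∧ MeasurableSet F ∧ μ F = r := by
  rcases eq_or_ne r 0 with rfl | hr0
  · exact ⟨∅, empty_subset _, .empty, measure_empty⟩
  rcases eq_or_lt_of_le hr with heq | hlt
  · exact ⟨E, subset_rfl, hE, heq.symm⟩
  obtain ⟨t, htm, htE, hrt, htfin⟩ := Measure.exists_subset_measure_lt_top hE hlt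
  have hdiv : ∀ a b : ℕ, a ≤ b → (1:ℝ)/(b+1) ≤ 1/(a+1) := by
    intro a b hab
    apply one_div_le_one_div_of_le (by positivity)
    have : (a:ℝ) ≤ b := Nat.cast_le.2 hab
    linarith
  set g : ℝ → ℝ≥0∞ := fun x => μ (t ∩ Iic x) with hgdef
  have gmono : Monotone g := fun x y hxy =>
    measure_mono (inter_subset_inter_right _ (Iic_subset_Iic.2 hxy))
  have gmeas : ∀ x, MeasurableSet (t ∩ Iic x) := fun x => htm.inter measurableSet_Iic
  have gfin : ∀ x, g x ≠ ∞ := fun x =>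
    ((measure_mono inter_subset_left).trans_lt htfin).ne
  -- A nonempty
  have hAne : ∃ x, r ≤ g x := by
    have hsup : μ t = ⨆ n : ℕ, g (n : ℝ) := by
      rw [← Monotone.measure_iUnion (fun a b hab =>
        inter_subset_inter_right _ (Iic_subset_Iic.2 (by exact_mod_cast hab)))]
      congr 1
      ext y
      simp only [mem_iUnion, mem_inter_iff, mem_Iic]
      exact ⟨fun hy => by obtain ⟨n, hn⟩ := exists_nat_ge y; exact ⟨n, hy, hn⟩,
        fun ⟨n, hy, _⟩ => hy⟩
    rw [hsup] at hrt
    obtain ⟨n, hn⟩ := lt_iSup_iff.1 hrt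
    exact ⟨n, hn.le⟩
  obtain ⟨x₁, hx₁⟩ := hAne
  set A : Set ℝ := {x | r ≤ g x} with hAdef
  have hAne' : A.Nonempty := ⟨x₁, hx₁⟩
  have hbdd : BddBelow A := by
    have hanti : Antitone (fun n : ℕ => t ∩ Iic (-(n:ℝ))) := fun a b hab =>
      inter_subset_inter_right _ (Iic_subset_Iic.2 (neg_le_neg (Nat.cast_le.2 hab)))
    have hempty : ⋂ n : ℕ, t ∩ Iic (-(n:ℝ)) = ∅ := by
      ext y
      simp only [mem_iInter, mem_inter_iff, mem_Iic, mem_empty_iff_false, iff_false, not_forall]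
      obtain ⟨n, hn⟩ := exists_nat_gt (-y)
      exact ⟨n, fun h => absurd h.2 (by linarith)⟩
    have hinf : (⨅ n : ℕ, g (-(n:ℝ))) = 0 := by
      rw [← Antitone.measure_iInter hanti (fun n => (gmeas _).nullMeasurableSet) ⟨0, gfin _⟩,
        hempty, measure_empty]
    have : (⨅ n : ℕ, g (-(n:ℝ))) < r := hinf ▸ pos_iff_ne_zero.2 hr0
    obtain ⟨n, hn⟩ := iInf_lt_iff.1 this
    refine ⟨-(n:ℝ), fun x hx => ?_⟩
    by_contra hc
    push_neg at hc
    exact absurd (hx.trans (gmono hc.le)) (not_le.2 hn)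
  set x₀ := sInf A with hx₀
  have hupper : g x₀ ≤ r := by
    have hiio : t ∩ Iio x₀ = ⋃ n : ℕ, t ∩ Iic (x₀ - 1/(n+1)) := by
      ext y
      simp only [mem_inter_iff, mem_Iio, mem_iUnion, mem_Iic]
      constructor
      · rintro ⟨hy, hyx⟩
        obtain ⟨n, hn⟩ := exists_nat_one_div_lt (sub_pos.2 hyx)
        refine ⟨n, hy, ?_⟩
        push_cast at hn ⊢
        linarith
      · rintro ⟨n, hy, hn⟩
        have : (0:ℝ) < 1/((n:ℝ)+1) := by positivity
        exact ⟨hy, by linarith⟩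
    have h1 : μ (t ∩ Iio x₀) ≤ r := by
      rw [hiio, Monotone.measure_iUnion (fun a b hab => inter_subset_inter_right _
        (Iic_subset_Iic.2 (by have := hdiv a b hab; linarith)))]
      refine iSup_le fun n => le_of_lt ?_
      have hnot : x₀ - 1/(n+1) ∉ A := by
        intro h
        have h2 := csInf_le hbdd h
        have hpos : (0:ℝ) < 1/((n:ℝ)+1) := by positivity
        rw [← hx₀] at h2
        linarith
      simpa [hAdef, not_le] using hnot
    calc g x₀ ≤ μ ((t ∩ Iio x₀) ∪ {x₀}) := measure_mono (by
          intro y hy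
          rcases lt_or_eq_of_le (show y ≤ x₀ from hy.2) with h | h
          · exact Or.inl ⟨hy.1, h⟩
          · exact Or.inr (by simp [h]))
      _ ≤ μ (t ∩ Iio x₀) + μ {x₀} := measure_union_le _ _
      _ = μ (t ∩ Iio x₀) := by rw [measure_singleton, add_zero]
      _ ≤ r := h1
  have hlower : r ≤ g x₀ := by
    have heq : t ∩ Iic x₀ = ⋂ n : ℕ, t ∩ Iic (x₀ + 1/(n+1)) := by
      ext y
      simp only [mem_inter_iff, mem_Iic, mem_iInter]
      constructor
      · rintro ⟨hy, hle⟩ n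
        have : (0:ℝ) < 1/((n:ℝ)+1) := by positivity
        exact ⟨hy, by linarith⟩
      · intro h
        refine ⟨(h 0).1, ?_⟩
        by_contra hc
        push_neg at hc
        obtain ⟨n, hn⟩ := exists_nat_one_div_lt (sub_pos.2 hc)
        have h2 := (h n).2
        push_cast at hn h2 ⊢
        linarith
    have hinf : g x₀ = ⨅ n : ℕ, g (x₀ + 1/(n+1)) := by
      show μ (t ∩ Iic x₀) = _
      rw [heq]
      exact Antitone.measure_iInter (fun a b hab => inter_subset_inter_right _
        (Iic_subset_Iic.2 (by have := hdiv a b hab; linarith)))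
        (fun n => (gmeas _).nullMeasurableSet) ⟨0, gfin _⟩
    rw [hinf]
    refine le_iInf fun n => ?_
    have hpos : (0:ℝ) < 1/((n:ℝ)+1) := by positivity
    have hlt2 : sInf A < x₀ + 1/(n+1) := by rw [← hx₀]; linarith
    obtain ⟨a, haA, ha⟩ := (csInf_lt_iff hbdd hAne').1 hlt2
    exact haA.trans (gmono ha.le)
  exact ⟨t ∩ Iic x₀, inter_subset_left.trans htE, gmeas x₀, le_antisymm hupper hlower⟩

private lemma carve {ι : Type*} [DecidableEq ι] (μ : Measure ℝ) [SigmaFinite μ] [NullSingletonClass μ]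
    (T : Finset ι) (c : ι → ℝ≥0∞) (hc : ∀ k ∈ T, c k ≠ ∞) :
    ∀ E : Set ℝ, MeasurableSet E → (∑ k ∈ T, c k) ≤ μ E →
    ∃ F : ι → Set ℝ, (∀ k, MeasurableSet (F k)) ∧ (∀ k ∈ T, F k ⊆ E ∧ μ (F k) = c k) ∧
      (∀ k ∉ T, F k = ∅) ∧ (∀ k l, k ≠ l → Disjoint (F k) (F l)) := by
  induction T using Finset.induction_on with
  | empty =>
    intro E _ _
    exact ⟨fun _ => ∅, fun _ => .empty, fun k hk => absurd hk (Finset.notMem_empty k),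
      fun _ _ => rfl, fun _ _ _ => disjoint_bot_left⟩
  | @insert a T' ha ih =>
    intro E hE hsum
    rw [Finset.sum_insert ha] at hsum
    have hca : c a ≠ ∞ := hc a (Finset.mem_insert_self a T')
    obtain ⟨Fa, hFaE, hFam, hFaμ⟩ := sier μ hE (le_trans le_self_add hsum) hca
    have hrest : (∑ k ∈ T', c k) ≤ μ (E \ Fa) := by
      have h1 : μ E ≤ μ (E \ Fa) + c a := by
        rw [← hFaμ]
        refine (measure_mono (fun y hy => ?_)).trans (measure_union_le (E \ Fa) Fa)
        by_cases h : y ∈ Fa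
        · exact Or.inr h
        · exact Or.inl ⟨hy, h⟩
      have h2 : (∑ k ∈ T', c k) + c a ≤ μ (E \ Fa) + c a := by
        calc (∑ k ∈ T', c k) + c a = c a + ∑ k ∈ T', c k := add_comm _ _
          _ ≤ μ E := hsum
          _ ≤ μ (E \ Fa) + c a := h1
      exact (ENNReal.add_le_add_iff_right hca).1 h2
    obtain ⟨F', hF'm, hF'T, hF'nT, hF'disj⟩ :=
      ih (fun k hk => hc k (Finset.mem_insert_of_mem hk)) (E \ Fa) (hE.diff hFam) hrest
    refine ⟨fun k => if k = a then Fa else F' k, fun k => ?_, fun k hk => ?_, fun k hk => ?_,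
      fun k l hkl => ?_⟩
    · by_cases h : k = a <;> simp [h, hFam, hF'm k]
    · rcases Finset.mem_insert.1 hk with rfl | hk'
      · simp [hFaE, hFaμ]
      · have hka : k ≠ a := fun h => ha (h ▸ hk')
        simp only [if_neg hka]
        exact ⟨((hF'T k hk').1).trans diff_subset, (hF'T k hk').2⟩
    · have hka : k ≠ a := fun h => hk (h ▸ Finset.mem_insert_self a T')
      have hkT' : k ∉ T' := fun h => hk (Finset.mem_insert_of_mem h)
      simp [hka, hF'nT k hkT']
    · by_cases h1 : k = a
      · subst h1
        simp only [if_pos rfl, if_neg (Ne.symm hkl)]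
        by_cases h2 : l ∈ T'
        · exact (Set.disjoint_of_subset_right (hF'T l h2).1 disjoint_sdiff_right).symm.symm
        · simp [hF'nT l h2]
      · by_cases h2 : l = a
        · subst h2
          simp only [if_neg h1, if_pos rfl]
          by_cases h3 : k ∈ T'
          · exact Set.disjoint_of_subset_left (hF'T k h3).1 disjoint_sdiff_left
          · simp [hF'nT k h3]
        · simp only [if_neg h1, if_neg h2]
          exact hF'disj k l hkl

private lemma pow_sum_le (m : ℕ) (hm : 1 ≤ m) {α : ℝ} (hα : 1 < α) (x : Fin m → ℝ)
    (hx : ∀ k, 0 ≤ x k) :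
    (∑ k, x k) ^ α ≤ (m:ℝ) ^ (α-1) * ∑ k, x k ^ α := by
  have hm0 : (0:ℝ) < m := by exact_mod_cast hm
  have hsum : (0:ℝ) ≤ ∑ k, x k := Finset.sum_nonneg fun k _ => hx k
  have key := Real.rpow_arith_mean_le_arith_mean_rpow Finset.univ (fun _ => 1/(m:ℝ)) x
    (fun _ _ => by positivity)
    (by simp [Finset.sum_const, Finset.card_univ]; field_simp)
    (fun k _ => hx k) hα.le
  rw [← Finset.mul_sum, Real.mul_rpow (by positivity) hsum, ← Finset.mul_sum] at key
  have h1 : (0:ℝ) ≤ (m:ℝ) ^ α := Real.rpow_nonneg hm0.le α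
  calc (∑ k, x k) ^ α = (m:ℝ) ^ α * (((1:ℝ)/m) ^ α * (∑ k, x k) ^ α) := by
        rw [← mul_assoc, ← Real.mul_rpow hm0.le (by positivity)]
        rw [mul_one_div, div_self hm0.ne', Real.one_rpow, one_mul]
    _ ≤ (m:ℝ) ^ α * (((1:ℝ)/m) * ∑ k, x k ^ α) := by
        exact mul_le_mul_of_nonneg_left key h1
    _ = ((m:ℝ) ^ α * ((m:ℝ))⁻¹) * ∑ k, x k ^ α := by ring
    _ = (m:ℝ) ^ (α-1) * ∑ k, x k ^ α := by
        rw [Real.rpow_sub hm0, Real.rpow_one, div_eq_mul_inv]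

private lemma measurableSet_option' {ι : Type*} (s : Set (Option ι)) :
    MeasurableSet[⊤] s := MeasurableSpace.measurableSet_top


end MergeHelpers

open Set in
/-- **Lemma `merge`.** If the job set of instance `J` is partitioned into `m` parts
(job `i` belongs to part `P i`) and `(s k, σ k)` is a feasible schedule for the
sub-instance consisting of the jobs of part `k`, then there is a feasible schedule
for the whole instance `J` whose speed function is `t ↦ ∑ k, s k t`, and its energy
is at most `m^(α-1)` times the sum of the energies of the `m` schedules. -/
theorem merge_schedules (α : ℝ) (hα : 1 < α) (n m : ℕ) (hm : 1 ≤ m)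
    (J : SSInstance (Fin n)) (hrd : ∀ i, J.r i < J.d i) (hw : ∀ i, 0 ≤ J.w i)
    (P : Fin n → Fin m)
    (s : Fin m → ℝ → ℝ) (σ : (k : Fin m) → ℝ → Option {i : Fin n // P i = k})
    (hfeas : ∀ k : Fin m,
      SSFeasible (⟨fun i => J.r i.1, fun i => J.d i.1, fun i => J.w i.1⟩ :
        SSInstance {i : Fin n // P i = k}) (s k) (σ k)) :
    (∃ σC : ℝ → Option (Fin n), SSFeasible J (fun t => ∑ k, s k t) σC) ∧
      SSEnergy α (fun t => ∑ k, s k t)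
        ≤ ENNReal.ofReal ((m : ℝ) ^ (α - 1)) * ∑ k, SSEnergy α (s k) := by
  classical
  have hsm : ∀ k, Measurable (s k) := fun k => (hfeas k).1
  have hσm : ∀ k, Measurable (σ k) := fun k => (hfeas k).2.1
  have hsnn : ∀ k t, 0 ≤ s k t := fun k => (hfeas k).2.2.1
  set S : ℝ → ℝ := fun t => ∑ k, s k t with hSdef
  have hSm : Measurable S := Finset.measurable_sum _ (fun k _ => hsm k)
  have hSnn : ∀ t, 0 ≤ S t := fun t => Finset.sum_nonneg fun k _ => hsnn k t
  constructor
  · -- construction of the combined schedule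
    set A : Fin n → Set ℝ := fun i => {t | σ (P i) t = some ⟨i, rfl⟩} with hAdef
    have hAm : ∀ i, MeasurableSet (A i) := by
      intro i
      simp only [hAdef]
      exact hσm (P i) (measurableSet_option' {some ⟨i, rfl⟩})
    have hAsub : ∀ i, A i ⊆ Set.Ico (J.r i) (J.d i) :=
      fun i => ((hfeas (P i)).2.2.2 ⟨i, rfl⟩).1
    have hWle : ∀ i, J.w i ≤ ∫ t in A i, s (P i) t :=
      fun i => ((hfeas (P i)).2.2.2 ⟨i, rfl⟩).2
    set ν : Fin m → Measure ℝ :=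
      fun k => volume.withDensity (fun t => ENNReal.ofReal (s k t)) with hνdef
    set μ : Measure ℝ := volume.withDensity (fun t => ENNReal.ofReal (S t)) with hμdef
    haveI hμsf : SigmaFinite μ := SigmaFinite.withDensity_ofReal S
    haveI hμna : NullSingletonClass μ := by
      refine ⟨fun x => ?_⟩
      rw [hμdef, withDensity_apply _ (measurableSet_singleton x)]
      exact setLIntegral_measure_zero _ _ (measure_singleton x)
    -- integrability for nontrivial jobs
    have hint : ∀ i, 0 < J.w i → IntegrableOn (s (P i)) (A i) := by
      intro i hwi
      by_contra h
      have := hWle i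
      rw [MeasureTheory.integral_undef h] at this
      exact absurd this (not_le.2 hwi)
    have hνA : ∀ i, 0 < J.w i → ν (P i) (A i) = ENNReal.ofReal (∫ t in A i, s (P i) t) := by
      intro i hwi
      rw [hνdef]
      rw [withDensity_apply _ (hAm i)]
      exact (ofReal_integral_eq_lintegral_ofReal (hint i hwi)
        (ae_of_all _ fun t => hsnn _ t)).symm
    -- cells
    set E : (∀ k : Fin m, Option {i : Fin n // P i = k}) → Set ℝ :=
      fun v => ⋂ k, {t | σ k t = v k} with hEdef
    have hEm : ∀ v, MeasurableSet (E v) := by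
      intro v
      simp only [hEdef]
      exact MeasurableSet.iInter fun k => hσm k (measurableSet_option' {v k})
    have hEmem : ∀ t v, t ∈ E v ↔ ∀ k, σ k t = v k := by
      intro t v
      simp only [hEdef, mem_iInter, mem_setOf_eq]
    have hEdisj : ∀ v v', v ≠ v' → Disjoint (E v) (E v') := by
      intro v v' hvv'
      rw [Set.disjoint_left]
      intro t ht ht'
      exact hvv' (funext fun k => ((hEmem t v).1 ht k).symm.trans ((hEmem t v').1 ht' k))
    set Tv : (∀ k : Fin m, Option {i : Fin n // P i = k}) → Finset (Fin m) :=
      fun v => Finset.univ.filter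
        (fun k => ∃ j : {i : Fin n // P i = k}, v k = some j ∧ 0 < J.w j.1) with hTvdef
    have hEsubA : ∀ v (i : Fin n), v (P i) = some ⟨i, rfl⟩ → E v ⊆ A i := by
      intro v i hv t ht
      show σ (P i) t = some ⟨i, rfl⟩
      rw [(hEmem t v).1 ht (P i), hv]
    have hc : ∀ v, ∀ k ∈ Tv v, ν k (E v) ≠ ∞ := by
      intro v k hk
      rw [hTvdef] at hk
      obtain ⟨j, hj, hwj⟩ := (Finset.mem_filter.1 hk).2
      obtain ⟨i, rfl⟩ := j
      have hsub : E v ⊆ A i := hEsubA v i hj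
      have : ν (P i) (E v) ≤ ν (P i) (A i) := measure_mono hsub
      rw [hνA i hwj] at this
      exact (this.trans_lt ENNReal.ofReal_lt_top).ne
    have hcell : ∀ v, (∑ k ∈ Tv v, ν k (E v)) ≤ μ (E v) := by
      intro v
      have h1 : ∀ k, ν k (E v) = ∫⁻ t in E v, ENNReal.ofReal (s k t) := by
        intro k
        rw [hνdef, withDensity_apply _ (hEm v)]
      have h2 : μ (E v) = ∫⁻ t in E v, ENNReal.ofReal (S t) := by
        rw [hμdef, withDensity_apply _ (hEm v)]
      simp only [h1, h2]
      rw [← lintegral_finset_sum' _ (fun k _ => ((hsm k).ennreal_ofReal).aemeasurable.restrict)]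
      refine lintegral_mono fun t => ?_
      calc (∑ k ∈ Tv v, ENNReal.ofReal (s k t))
          ≤ ∑ k : Fin m, ENNReal.ofReal (s k t) :=
            Finset.sum_le_sum_of_subset (Finset.subset_univ _)
        _ = ENNReal.ofReal (S t) := by
            rw [hSdef, ENNReal.ofReal_sum_of_nonneg (fun k _ => hsnn k t)]
    have hcarve := fun v => carve μ (Tv v) (fun k => ν k (E v)) (hc v) (E v) (hEm v) (hcell v)
    choose F hFm hFT hFnT hFdisj using hcarve
    -- B
    set B : Fin n → Set ℝ := fun i => if 0 < J.w i then
      ⋃ v, ⋃ (_ : v (P i) = some ⟨i, rfl⟩), F v (P i) else ∅ with hBdef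
    have hPmem : ∀ (i : Fin n) v, 0 < J.w i → v (P i) = some ⟨i, rfl⟩ → P i ∈ Tv v := by
      intro i v hwi hv
      rw [hTvdef]
      exact Finset.mem_filter.2 ⟨Finset.mem_univ _, ⟨⟨i, rfl⟩, hv, hwi⟩⟩
    have hBm : ∀ i, MeasurableSet (B i) := by
      intro i
      by_cases hwi : 0 < J.w i
      · simp only [hBdef, if_pos hwi]
        exact MeasurableSet.iUnion fun v => MeasurableSet.iUnion fun _ => hFm v (P i)
      · simp only [hBdef, if_neg hwi]
        exact MeasurableSet.empty
    have hBsubA : ∀ i, B i ⊆ A i := by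
      intro i
      by_cases hwi : 0 < J.w i
      · simp only [hBdef, if_pos hwi]
        refine iUnion_subset fun v => iUnion_subset fun hv => ?_
        exact ((hFT v (P i) (hPmem i v hwi hv)).1).trans (hEsubA v i hv)
      · simp only [hBdef, if_neg hwi]
        exact empty_subset _
    have hFsubE : ∀ (i : Fin n) v, 0 < J.w i → v (P i) = some ⟨i, rfl⟩ → F v (P i) ⊆ E v :=
      fun i v hwi hv => (hFT v (P i) (hPmem i v hwi hv)).1
    have hBμ : ∀ i, 0 < J.w i → μ (B i) = ν (P i) (A i) := by
      intro i hwi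
      have hbi : B i = ⋃ v ∈ Finset.univ.filter
          (fun v => v (P i) = some ⟨i, rfl⟩), F v (P i) := by
        simp only [hBdef, if_pos hwi]
        ext t
        simp only [mem_iUnion, Finset.mem_filter, Finset.mem_univ, true_and, exists_prop]
      have hai : A i = ⋃ v ∈ Finset.univ.filter
          (fun v => v (P i) = some ⟨i, rfl⟩), E v := by
        apply Subset.antisymm
        · intro t ht
          have htE : t ∈ E (fun k => σ k t) := (hEmem t _).2 (fun k => rfl)
          refine mem_biUnion (x := fun k => σ k t) ?_ htE
          exact Finset.mem_filter.2 ⟨Finset.mem_univ _,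
            show σ (P i) t = some ⟨i, rfl⟩ from ht⟩
        · exact iUnion₂_subset fun v hv => hEsubA v i (Finset.mem_filter.1 hv).2
      rw [hbi, measure_biUnion_finset
        (fun v hv v' hv' hne => (hEdisj v v' hne).mono
          (hFsubE i v hwi (Finset.mem_filter.1 hv).2)
          (hFsubE i v' hwi (Finset.mem_filter.1 hv').2))
        (fun v _ => hFm v (P i)),
        hai, measure_biUnion_finset
        (fun v hv v' hv' hne => hEdisj v v' hne)
        (fun v _ => hEm v)]
      exact Finset.sum_congr rfl fun v hv =>
        (hFT v (P i) (hPmem i v hwi (Finset.mem_filter.1 hv).2)).2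
    have hBdisj : ∀ i j : Fin n, i ≠ j → Disjoint (B i) (B j) := by
      intro i j hij
      by_cases hwi : 0 < J.w i
      · by_cases hwj : 0 < J.w j
        · simp only [hBdef, if_pos hwi, if_pos hwj]
          rw [Set.disjoint_left]
          rintro t ht ht'
          simp only [mem_iUnion] at ht ht'
          obtain ⟨v, hv, htF⟩ := ht
          obtain ⟨v', hv', htF'⟩ := ht'
          by_cases hvv : v = v'
          · subst hvv
            by_cases hPij : P i = P j
            · have h1 : (v (P i)).map Subtype.val = some i := by rw [hv]; rfl
              have h2 : (v (P j)).map Subtype.val = some j := by rw [hv']; rfl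
              rw [hPij, h2] at h1
              exact hij (Option.some_injective _ h1.symm)
            · exact Set.disjoint_left.1 (hFdisj v (P i) (P j) hPij) htF htF'
          · exact Set.disjoint_left.1 (hEdisj v v' hvv)
              (hFsubE i v hwi hv htF) (hFsubE j v' hwj hv' htF')
        · simp only [hBdef, if_neg hwj]
          exact disjoint_empty _
      · simp only [hBdef, if_neg hwi]
        exact empty_disjoint _
    set σC : ℝ → Option (Fin n) := fun t =>
      if h : ∃ i, t ∈ B i then some (Classical.choose h) else none with hσCdef
    have hpre : ∀ i, {t | σC t = some i} = B i := by
      intro i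
      ext t
      simp only [mem_setOf_eq, hσCdef]
      constructor
      · intro h
        split at h
        · rename_i hex
          have hspec := Classical.choose_spec hex
          rw [Option.some_inj] at h
          exact h ▸ hspec
        · exact absurd h (by simp)
      · intro ht
        have hex : ∃ j, t ∈ B j := ⟨i, ht⟩
        rw [dif_pos hex]
        have hspec := Classical.choose_spec hex
        have hchoose : Classical.choose hex = i := by
          by_contra hne
          exact Set.disjoint_left.1 (hBdisj _ i hne) hspec ht
        rw [hchoose]
    have hprenone : {t | σC t = none} = (⋃ i, B i)ᶜ := by
      ext t
      simp only [mem_setOf_eq, hσCdef, mem_compl_iff, mem_iUnion]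
      split <;> rename_i h
      · simp [h]
      · simp [h]
    have hσCm : Measurable σC := by
      apply measurable_to_countable'
      intro x
      cases x with
      | none =>
        have he : σC ⁻¹' {none} = (⋃ i, B i)ᶜ := hprenone
        rw [he]
        exact (MeasurableSet.iUnion fun i => hBm i).compl
      | some i =>
        have he : σC ⁻¹' {some i} = B i := hpre i
        rw [he]
        exact hBm i
    refine ⟨σC, hSm, hσCm, hSnn, fun i => ⟨?_, ?_⟩⟩
    · rw [hpre i]
      exact (hBsubA i).trans (hAsub i)
    · rw [hpre i]
      show J.w i ≤ ∫ t in B i, S t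
      by_cases hwi : 0 < J.w i
      · have hμB := hBμ i hwi
        rw [hνA i hwi] at hμB
        set Wi := ∫ t in A i, s (P i) t with hWidef
        have hWinn : 0 ≤ Wi := le_trans (hw i) (hWle i)
        have hlint : ∫⁻ t in B i, ENNReal.ofReal (S t) = ENNReal.ofReal Wi := by
          rw [← withDensity_apply _ (hBm i), ← hμdef]
          exact hμB
        have hSint : IntegrableOn S (B i) := by
          constructor
          · exact hSm.aestronglyMeasurable
          · rw [hasFiniteIntegral_iff_ofReal (ae_of_all _ hSnn)]
            rw [hlint]
            exact ENNReal.ofReal_lt_top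
        rw [integral_eq_lintegral_of_nonneg_ae (ae_of_all _ hSnn)
          hSm.aestronglyMeasurable.restrict, hlint, ENNReal.toReal_ofReal hWinn]
        exact hWle i
      · have hBi : B i = ∅ := by simp only [hBdef, if_neg hwi]
        rw [hBi]
        simp only [Measure.restrict_empty, integral_zero_measure]
        exact not_lt.1 hwi
  · -- energy bound
    have hpt : ∀ t, ENNReal.ofReal ((∑ k, s k t) ^ α)
        ≤ ENNReal.ofReal ((m:ℝ) ^ (α-1)) * ∑ k, ENNReal.ofReal (s k t ^ α) := by
      intro t
      rw [← ENNReal.ofReal_sum_of_nonneg (fun k _ => Real.rpow_nonneg (hsnn k t) α),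
        ← ENNReal.ofReal_mul (Real.rpow_nonneg (by positivity) _)]
      exact ENNReal.ofReal_le_ofReal (pow_sum_le m hm hα _ (fun k => hsnn k t))
    have hmeas : ∀ k, Measurable (fun t => ENNReal.ofReal (s k t ^ α)) := by
      intro k
      exact ((Real.continuous_rpow_const (by linarith : (0:ℝ) ≤ α)).measurable.comp
        (hsm k)).ennreal_ofReal
    calc SSEnergy α (fun t => ∑ k, s k t)
        ≤ ∫⁻ t, ENNReal.ofReal ((m:ℝ) ^ (α-1)) * ∑ k, ENNReal.ofReal (s k t ^ α) :=
          lintegral_mono hpt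
      _ = ENNReal.ofReal ((m:ℝ) ^ (α-1)) * ∫⁻ t, ∑ k, ENNReal.ofReal (s k t ^ α) := by
          rw [lintegral_const_mul _ (Finset.measurable_sum _ (fun k _ => hmeas k))]
      _ = ENNReal.ofReal ((m:ℝ) ^ (α-1)) * ∑ k, SSEnergy α (s k) := by
          rw [lintegral_finset_sum' _ (fun k _ => (hmeas k).aemeasurable)]
          rfl
end

section
/- Existence of the waterfilling volumes (Lemma 'y_exist'): Let T be a finite nonempty set, let V : T → ℝ with V(t) ≥ 0 for all t, and let δ > 0, μ > 0, ℓ > 0 and w be reals with 0 ≤ w ≤ δ·|T|. Then there exist values y : T → ℝ with 0 ≤ y(t) ≤ δ for all t such that, setting X = w − Σ_{t ∈ T} y(t), for every t ∈ T: if y(t) = 0 then V(t)/μ ≥ X/ℓ; if 0 < y(t) < δ then (V(t) + y(t))/μ = X/ℓ; and if y(t) = δ then (V(t) + y(t))/μ ≤ X/ℓ. -/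
/-- **Lemma `y_exist`.** Existence of the waterfilling volumes: there are values
`0 ≤ y t ≤ δ` such that, with `X = w - ∑ t, y t`, every slot `t` with `y t = 0` has
right-part speed `V t / μ` at least `X / ℓ`, every slot with `0 < y t < δ` has
`(V t + y t) / μ = X / ℓ`, and every slot with `y t = δ` has `(V t + y t) / μ ≤ X / ℓ`. -/
theorem y_exist {T : Type*} [Fintype T] [Nonempty T]
    (V : T → ℝ) (hV : ∀ t, 0 ≤ V t)
    (δ μ ℓ w : ℝ) (hδ : 0 < δ) (hμ : 0 < μ) (hℓ : 0 < ℓ)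
    (hw0 : 0 ≤ w) (hwδ : w ≤ δ * Fintype.card T) :
    ∃ y : T → ℝ, (∀ t, 0 ≤ y t ∧ y t ≤ δ) ∧
      (∀ t, (y t = 0 → (w - ∑ t', y t') / ℓ ≤ V t / μ) ∧
        (0 < y t → y t < δ → (V t + y t) / μ = (w - ∑ t', y t') / ℓ) ∧
        (y t = δ → (V t + y t) / μ ≤ (w - ∑ t', y t') / ℓ)) := by
  classical
  set g : ℝ → T → ℝ := fun L t => min δ (max 0 (L * μ - V t)) with hg
  set f : ℝ → ℝ := fun L => (w - ∑ t, g L t) / ℓ - L with hf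
  have hcont : Continuous f := by
    apply Continuous.sub _ continuous_id
    apply Continuous.div_const
    apply Continuous.sub continuous_const
    apply continuous_finset_sum
    intro t _
    exact continuous_const.min
      (continuous_const.max ((continuous_id.mul continuous_const).sub continuous_const))
  have hg0 : ∀ t, g 0 t = 0 := by
    intro t
    have h1 : (0 : ℝ) * μ - V t ≤ 0 := by
      have := hV t; nlinarith
    show min δ (max 0 ((0:ℝ) * μ - V t)) = 0
    rw [max_eq_left h1, min_eq_right hδ.le]
  have hgnn : ∀ L t, 0 ≤ g L t := fun L t => le_min hδ.le (le_max_left _ _)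
  have hf0 : 0 ≤ f 0 := by
    have : ∑ t, g 0 t = 0 := by simp [hg0]
    simp [hf, this]
    positivity
  have hfb : f (w / ℓ) ≤ 0 := by
    have hs : 0 ≤ ∑ t, g (w / ℓ) t := Finset.sum_nonneg fun t _ => hgnn _ t
    have : (w - ∑ t, g (w / ℓ) t) / ℓ ≤ w / ℓ := by
      gcongr
      linarith
    simpa [hf] using sub_nonpos.mpr this
  have hab : (0 : ℝ) ≤ w / ℓ := div_nonneg hw0 hℓ.le
  obtain ⟨L, hL, hfL⟩ := intermediate_value_Icc' hab hcont.continuousOn ⟨hfb, hf0⟩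
  have hX : (w - ∑ t, g L t) / ℓ = L := by
    have : f L = 0 := hfL
    simp only [hf] at this
    linarith
  refine ⟨g L, fun t => ⟨hgnn L t, min_le_left _ _⟩, fun t => ⟨?_, ?_, ?_⟩⟩
  · intro h0
    rw [hX]
    have hm : max 0 (L * μ - V t) = 0 := by
      rcases le_or_gt (L * μ - V t) 0 with h | h
      · exact max_eq_left h
      · exfalso
        have : 0 < g L t := lt_min hδ (by simpa [max_eq_right h.le] using h)
        simp [h0] at this
    have : L * μ - V t ≤ 0 := by
      by_contra hc
      push_neg at hc
      rw [max_eq_right hc.le] at hm; linarith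
    rw [le_div_iff₀ hμ]; linarith
  · intro hpos hlt
    rw [hX]
    have hm : g L t = max 0 (L * μ - V t) := by
      rcases min_cases δ (max 0 (L * μ - V t)) with ⟨h1, h2⟩ | ⟨h1, h2⟩
      · exfalso; rw [hg] at hlt; simp only at hlt; rw [h1] at hlt; exact lt_irrefl _ hlt
      · exact h1
    have hm2 : g L t = L * μ - V t := by
      rcases max_cases (0 : ℝ) (L * μ - V t) with ⟨h1, h2⟩ | ⟨h1, h2⟩
      · exfalso; rw [hm, h1] at hpos; exact lt_irrefl _ hpos
      · rw [hm, h1]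
    rw [eq_comm, eq_div_iff hμ.ne']
    linarith
  · intro hδeq
    rw [hX, hδeq]
    have hm : δ ≤ max 0 (L * μ - V t) := by
      rw [← hδeq]; exact min_le_right _ _
    have : δ ≤ L * μ - V t := by
      rcases max_cases (0 : ℝ) (L * μ - V t) with ⟨h1, h2⟩ | ⟨h1, h2⟩
      · rw [h1] at hm; linarith
      · rwa [h1] at hm
    rw [div_le_iff₀ hμ]
    linarith
end

section
/- Per-job consistency inequality (key step of Lemma 'general-consistency'): Let α > 1, μ > 0 and ℓ > 0 be reals, T a finite set, X ≥ 0 a real, and y, V : T → ℝ with y(t) ≥ 0 and V(t) ≥ 0 for all t ∈ T. Set w = X + Σ_{t ∈ T} y(t). If (V(t) + y(t))/μ ≤ X/ℓ for every t ∈ T with y(t) > 0, then X^α/ℓ^(α−1) + Σ_{t ∈ T} ((V(t) + y(t))^α − V(t)^α)/μ^(α−1) ≤ w^α/ℓ^(α−1). -/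
/-- Upper tangent bound: `(a+b)^α - a^α ≤ α * b * (a+b)^(α-1)` for `a,b ≥ 0`, `1 < α`. -/
lemma aux_upper {α a b : ℝ} (hα : 1 < α) (ha : 0 ≤ a) (hb : 0 ≤ b) :
    (a + b) ^ α - a ^ α ≤ α * b * (a + b) ^ (α - 1) := by
  rcases eq_or_lt_of_le (by positivity : (0:ℝ) ≤ a + b) with hc | hc
  · have ha0 : a = 0 := by linarith [hb]
    have hb0 : b = 0 := by linarith
    simp [ha0, hb0, Real.zero_rpow (by linarith : α ≠ 0)]
  · have hs : -1 ≤ -(b / (a + b)) := by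
      have : b / (a + b) ≤ 1 := by rw [div_le_one hc]; linarith
      linarith
    have hber := one_add_mul_self_le_rpow_one_add hs hα.le
    have h1 : 1 + -(b / (a + b)) = a / (a + b) := by field_simp; ring
    rw [h1] at hber
    have hcα : 0 < (a + b) ^ α := Real.rpow_pos_of_pos hc α
    have hthis := mul_le_mul_of_nonneg_right hber hcα.le
    rw [Real.div_rpow ha hc.le, div_mul_cancel₀ _ (ne_of_gt hcα)] at hthis
    have he : (a + b) ^ α = (a + b) ^ (α - 1) * (a + b) := by
      rw [← Real.rpow_add_one hc.ne' (α - 1)]; ring_nf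
    have hkey : (a + b) ^ α - α * b * (a + b) ^ (α - 1) ≤ a ^ α := by
      calc (a + b) ^ α - α * b * (a + b) ^ (α - 1)
          = (1 + α * -(b / (a + b))) * (a + b) ^ α := by
            rw [he]; field_simp; ring
        _ ≤ a ^ α := hthis
    linarith

/-- Lower tangent bound: `a^α + α * b * a^(α-1) ≤ (a+b)^α` for `a,b ≥ 0`, `1 < α`. -/
lemma aux_lower {α a b : ℝ} (hα : 1 < α) (ha : 0 ≤ a) (hb : 0 ≤ b) :
    a ^ α + α * b * a ^ (α - 1) ≤ (a + b) ^ α := by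
  rcases eq_or_lt_of_le ha with rfl | ha'
  · simp [Real.zero_rpow (by linarith : α ≠ 0),
      Real.zero_rpow (by intro hz; nlinarith [sub_eq_zero.mp hz] : α - 1 ≠ 0)]
    positivity
  · have hba : 0 ≤ b / a := by positivity
    have hs : -1 ≤ b / a := by linarith
    have hber := one_add_mul_self_le_rpow_one_add hs hα.le
    have haα : 0 < a ^ α := Real.rpow_pos_of_pos ha' α
    have hthis := mul_le_mul_of_nonneg_right hber haα.le
    have h1 : (1 + b / a) ^ α * a ^ α = (a + b) ^ α := by
      rw [← Real.mul_rpow (by positivity) ha]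
      congr 1; field_simp
    rw [h1] at hthis
    have he : a ^ α = a ^ (α - 1) * a := by
      rw [← Real.rpow_add_one ha'.ne' (α - 1)]; ring_nf
    calc a ^ α + α * b * a ^ (α - 1)
        = (1 + α * (b / a)) * a ^ α := by rw [he]; field_simp
      _ ≤ (a + b) ^ α := hthis

/-- **Per-job consistency inequality** (key step of Lemma `general-consistency`):
if `(V t + y t)/μ ≤ X/ℓ` whenever `y t > 0`, then, with `w = X + ∑ t, y t`,
`X^α/ℓ^(α-1) + ∑ t, ((V t + y t)^α - (V t)^α)/μ^(α-1) ≤ w^α/ℓ^(α-1)`. -/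
theorem per_job_consistency (α μ ℓ : ℝ) (hα : 1 < α) (hμ : 0 < μ) (hℓ : 0 < ℓ)
    {T : Type*} [Fintype T] (X : ℝ) (hX : 0 ≤ X) (y V : T → ℝ)
    (hy : ∀ t, 0 ≤ y t) (hV : ∀ t, 0 ≤ V t)
    (h : ∀ t, 0 < y t → (V t + y t) / μ ≤ X / ℓ) :
    X ^ α / ℓ ^ (α - 1) + ∑ t : T, ((V t + y t) ^ α - V t ^ α) / μ ^ (α - 1)
      ≤ (X + ∑ t : T, y t) ^ α / ℓ ^ (α - 1) := by
  have hα1 : (0:ℝ) < α - 1 := by linarith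
  have hμα : 0 < μ ^ (α - 1) := Real.rpow_pos_of_pos hμ _
  have hℓα : 0 < ℓ ^ (α - 1) := Real.rpow_pos_of_pos hℓ _
  set S := ∑ t : T, y t with hS
  have hSnn : 0 ≤ S := Finset.sum_nonneg fun t _ => hy t
  -- per-term bound
  have hterm : ∀ t : T, ((V t + y t) ^ α - V t ^ α) / μ ^ (α - 1)
      ≤ α * y t * (X ^ (α - 1) / ℓ ^ (α - 1)) := by
    intro t
    rcases eq_or_lt_of_le (hy t) with h0 | h0
    · simp [← h0]
    · have hb := h t h0
      have hVy : 0 ≤ V t + y t := by linarith [hV t, hy t]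
      have hstep : ((V t + y t) ^ α - V t ^ α) / μ ^ (α - 1)
          ≤ α * y t * ((V t + y t) ^ (α - 1) / μ ^ (α - 1)) := by
        rw [div_le_iff₀ hμα] -- careful
        have := aux_upper hα (hV t) (hy t)
        calc (V t + y t) ^ α - V t ^ α ≤ α * y t * (V t + y t) ^ (α - 1) := this
          _ = α * y t * ((V t + y t) ^ (α - 1) / μ ^ (α - 1)) * μ ^ (α - 1) := by
              field_simp
      refine hstep.trans ?_
      have hmono : (V t + y t) ^ (α - 1) / μ ^ (α - 1) ≤ X ^ (α - 1) / ℓ ^ (α - 1) := by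
        rw [← Real.div_rpow hVy hμ.le, ← Real.div_rpow hX hℓ.le]
        exact Real.rpow_le_rpow (by positivity) hb hα1.le
      have : 0 ≤ α * y t := by positivity
      exact mul_le_mul_of_nonneg_left hmono this
  have hsum : ∑ t : T, ((V t + y t) ^ α - V t ^ α) / μ ^ (α - 1)
      ≤ α * S * (X ^ (α - 1) / ℓ ^ (α - 1)) := by
    calc ∑ t : T, ((V t + y t) ^ α - V t ^ α) / μ ^ (α - 1)
        ≤ ∑ t : T, α * y t * (X ^ (α - 1) / ℓ ^ (α - 1)) :=
          Finset.sum_le_sum fun t _ => hterm t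
      _ = α * S * (X ^ (α - 1) / ℓ ^ (α - 1)) := by
          rw [hS, Finset.mul_sum, Finset.sum_mul]
  have hlow := aux_lower hα hX hSnn
  have : X ^ α / ℓ ^ (α - 1) + α * S * (X ^ (α - 1) / ℓ ^ (α - 1))
      ≤ (X + S) ^ α / ℓ ^ (α - 1) := by
    have heq : X ^ α / ℓ ^ (α - 1) + α * S * (X ^ (α - 1) / ℓ ^ (α - 1))
        = (X ^ α + α * S * X ^ (α - 1)) / ℓ ^ (α - 1) := by field_simp
    rw [heq]
    gcongr
  calc X ^ α / ℓ ^ (α - 1) + ∑ t : T, ((V t + y t) ^ α - V t ^ α) / μ ^ (α - 1)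
      ≤ X ^ α / ℓ ^ (α - 1) + α * S * (X ^ (α - 1) / ℓ ^ (α - 1)) := by linarith
    _ ≤ (X + S) ^ α / ℓ ^ (α - 1) := this
end

section
/- Aggregate consistency inequality (Lemma 'general-consistency', combinatorial core): Let α > 1 and μ > 0 be reals, n ≥ 1, and T a finite set. For each j ∈ {1, …, n} let T_j ⊆ T, let ℓ_j > 0 and X_j ≥ 0 be reals, and let y_j : T_j → ℝ with y_j(t) ≥ 0; set w_j = X_j + Σ_{t ∈ T_j} y_j(t). For t ∈ T and j ∈ {1, …, n+1} define V_t(j) = Σ_{j' < j with t ∈ T_{j'}} y_{j'}(t). Assume that for every j and every t ∈ T_j with y_j(t) > 0 one has (V_t(j) + y_j(t))/μ ≤ X_j/ℓ_j. Then Σ_{j=1}^n X_j^α/ℓ_j^(α−1) + Σ_{t ∈ T} V_t(n+1)^α/μ^(α−1) ≤ Σ_{j=1}^n w_j^α/ℓ_j^(α−1). -/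
open Finset

private lemma rpow_mvt {α : ℝ} (hα : 1 ≤ α) {a b : ℝ} (ha : 0 ≤ a) (hb : 0 < b) :
    ∃ c, a ≤ c ∧ c ≤ a + b ∧ (a + b) ^ α - a ^ α = α * c ^ (α - 1) * b := by
  obtain ⟨c, hc, hc'⟩ := exists_hasDerivAt_eq_slope (fun x => x ^ α)
    (fun x => α * x ^ (α - 1)) (lt_add_of_pos_right a hb)
    (continuousOn_of_forall_continuousAt fun x _ =>
      Real.continuousAt_rpow_const x α (Or.inr (by linarith)))
    (fun x _ => Real.hasDerivAt_rpow_const (Or.inr hα))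
  refine ⟨c, hc.1.le, hc.2.le, ?_⟩
  have hb' : a + b - a = b := by ring
  rw [hb'] at hc'
  field_simp at hc'
  linarith [hc']

private lemma rpow_lower {α : ℝ} (hα : 1 ≤ α) {a b : ℝ} (ha : 0 ≤ a) (hb : 0 ≤ b) :
    a ^ α + α * a ^ (α - 1) * b ≤ (a + b) ^ α := by
  rcases hb.eq_or_lt with rfl | hb
  · simp
  obtain ⟨c, hac, _, hEq⟩ := rpow_mvt hα ha hb
  have h2 : a ^ (α - 1) ≤ c ^ (α - 1) := Real.rpow_le_rpow ha hac (by linarith)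
  have h3 := mul_le_mul_of_nonneg_right
    (mul_le_mul_of_nonneg_left h2 (by linarith : (0:ℝ) ≤ α)) hb.le
  linarith

private lemma rpow_upper {α : ℝ} (hα : 1 ≤ α) {a b : ℝ} (ha : 0 ≤ a) (hb : 0 ≤ b) :
    (a + b) ^ α ≤ a ^ α + α * (a + b) ^ (α - 1) * b := by
  rcases hb.eq_or_lt with rfl | hb
  · simp
  obtain ⟨c, hca, hcb, hEq⟩ := rpow_mvt hα ha hb
  have hc0 : 0 ≤ c := le_trans ha hca
  have h2 : c ^ (α - 1) ≤ (a + b) ^ (α - 1) := Real.rpow_le_rpow hc0 hcb (by linarith)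
  have h3 := mul_le_mul_of_nonneg_right
    (mul_le_mul_of_nonneg_left h2 (by linarith : (0:ℝ) ≤ α)) hb.le
  linarith

/-- **Aggregate consistency inequality** (combinatorial core of Lemma
`general-consistency`): jobs `j : Fin n` arrive in order, job `j` has slot set `Tj j`,
left-part volume `X j`, reserved left-part length `ℓ j`, and right-part volumes
`y j t`; `V_t(j) = ∑_{j' < j, t ∈ Tj j'} y j' t` is the right-part volume of slot `t`
before job `j` arrives.  If `(V_t(j) + y j t)/μ ≤ X j / ℓ j` whenever `y j t > 0`, then
`∑ j, (X j)^α/(ℓ j)^(α-1) + ∑ t, V_t(n+1)^α/μ^(α-1) ≤ ∑ j, (w j)^α/(ℓ j)^(α-1)`,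
where `w j = X j + ∑_{t ∈ Tj j} y j t`. -/
theorem aggregate_consistency (α μ : ℝ) (hα : 1 < α) (hμ : 0 < μ)
    (n : ℕ) (hn : 1 ≤ n) {T : Type*} [Fintype T] [DecidableEq T]
    (Tj : Fin n → Finset T) (ℓ X : Fin n → ℝ) (y : Fin n → T → ℝ)
    (hℓ : ∀ j, 0 < ℓ j) (hX : ∀ j, 0 ≤ X j) (hy : ∀ j, ∀ t ∈ Tj j, 0 ≤ y j t)
    (hmain : ∀ j, ∀ t ∈ Tj j, 0 < y j t →
      ((∑ j' ∈ univ.filter (fun j' : Fin n => j' < j ∧ t ∈ Tj j'), y j' t) + y j t) / μ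
        ≤ X j / ℓ j) :
    ∑ j : Fin n, X j ^ α / ℓ j ^ (α - 1)
      + ∑ t : T, (∑ j' ∈ univ.filter (fun j' : Fin n => t ∈ Tj j'), y j' t) ^ α / μ ^ (α - 1)
      ≤ ∑ j : Fin n, (X j + ∑ t ∈ Tj j, y j t) ^ α / ℓ j ^ (α - 1) := by
  classical
  have hα1 : 1 ≤ α := hα.le
  have hα0 : (0:ℝ) ≤ α - 1 := by linarith
  have hμp : 0 < μ ^ (α - 1) := Real.rpow_pos_of_pos hμ _
  set g : ℕ → T → ℝ := fun k t =>
    ∑ j' ∈ univ.filter (fun j' : Fin n => (j' : ℕ) < k ∧ t ∈ Tj j'), y j' t with hg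
  have hgnn : ∀ k t, 0 ≤ g k t := by
    intro k t
    refine Finset.sum_nonneg fun j' hj' => ?_
    rw [mem_filter] at hj'
    exact hy j' t hj'.2.2
  have hg0 : ∀ t, g 0 t = 0 := by intro t; simp [hg]
  have hgn : ∀ t, g n t
      = ∑ j' ∈ univ.filter (fun j' : Fin n => t ∈ Tj j'), y j' t := by
    intro t; simp [hg, Fin.is_lt]
  have hsucc : ∀ (j : Fin n) (t : T),
      g ((j : ℕ) + 1) t = g (j : ℕ) t + (if t ∈ Tj j then y j t else 0) := by
    intro j t
    have ha1 : g ((j : ℕ) + 1) t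
        = ∑ j' : Fin n, if ((j' : ℕ) < (j : ℕ) + 1 ∧ t ∈ Tj j') then y j' t else 0 := by
      simp only [hg]; rw [Finset.sum_filter]
    rw [ha1]
    have ha2 : g (j : ℕ) t
        = ∑ j' : Fin n, if ((j' : ℕ) < (j : ℕ) ∧ t ∈ Tj j') then y j' t else 0 := by
      simp only [hg]; rw [Finset.sum_filter]
    rw [ha2]
    have ha3 : (if t ∈ Tj j then y j t else 0)
        = ∑ j' : Fin n, if (j' = j ∧ t ∈ Tj j') then y j' t else 0 := by
      by_cases ht : t ∈ Tj j
      · rw [if_pos ht,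
          Finset.sum_eq_single j (fun b _ hb => if_neg (by simp [hb]))
            (fun h => absurd (Finset.mem_univ j) h)]
        simp [ht]
      · rw [if_neg ht]
        exact (Finset.sum_eq_zero fun b _ => if_neg (by rintro ⟨rfl, h⟩; exact ht h)).symm
    rw [ha3, ← Finset.sum_add_distrib]
    refine Finset.sum_congr rfl fun j' _ => ?_
    rcases lt_trichotomy (j' : ℕ) (j : ℕ) with h | h | h
    · have hj'j : j' ≠ j := by intro e; rw [e] at h; exact lt_irrefl _ h
      by_cases ht : t ∈ Tj j'
      · simp [h, Nat.lt_succ_of_lt h, ht, hj'j]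
      · simp [ht]
    · have he : j' = j := Fin.ext h
      subst he
      by_cases ht : t ∈ Tj j'
      · simp [ht, Nat.lt_succ_self]
      · simp [ht]
    · have h1 : ¬ ((j' : ℕ) < (j : ℕ) + 1) := by omega
      have h2 : ¬ ((j' : ℕ) < (j : ℕ)) := by omega
      have hj'j : j' ≠ j := by intro e; rw [e] at h; exact lt_irrefl _ h
      simp [h1, h2, hj'j]
  -- telescoping
  have htel : ∀ t, g n t ^ α = ∑ k ∈ Finset.range n, (g (k + 1) t ^ α - g k t ^ α) := by
    intro t
    rw [Finset.sum_range_sub (fun k => g k t ^ α), hg0,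
      Real.zero_rpow (by linarith : α ≠ 0)]
    ring
  -- per-job bound
  set B : Fin n → ℝ := fun j => α * (μ * (X j / ℓ j)) ^ (α - 1) * ∑ t ∈ Tj j, y j t with hB
  have hjob : ∀ j : Fin n,
      ∑ t : T, (g ((j : ℕ) + 1) t ^ α - g (j : ℕ) t ^ α) ≤ B j := by
    intro j
    have hstep : ∀ t : T, g ((j : ℕ) + 1) t ^ α - g (j : ℕ) t ^ α
        ≤ if t ∈ Tj j then α * (μ * (X j / ℓ j)) ^ (α - 1) * y j t else 0 := by
      intro t
      by_cases ht : t ∈ Tj j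
      · rw [hsucc j t, if_pos ht, if_pos ht]
        rcases (hy j t ht).eq_or_lt with h0 | h0
        · rw [← h0, add_zero, mul_zero, sub_self]
        · have hV := hmain j t ht h0
          have hgj : g (j : ℕ) t
              = ∑ j' ∈ univ.filter (fun j' : Fin n => j' < j ∧ t ∈ Tj j'), y j' t := by
            simp only [hg]
            apply Finset.sum_congr _ (fun _ _ => rfl)
            apply Finset.filter_congr
            intro j' _
            exact Iff.rfl
          have hb : g (j : ℕ) t + y j t ≤ μ * (X j / ℓ j) := by
            rw [hgj]
            rw [div_le_iff₀ hμ] at hV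
            linarith
          have h1 : (g (j : ℕ) t + y j t) ^ α - g (j : ℕ) t ^ α
              ≤ α * (g (j : ℕ) t + y j t) ^ (α - 1) * y j t := by
            have := rpow_upper hα1 (hgnn (j : ℕ) t) (hy j t ht)
            linarith
          have h2 : (g (j : ℕ) t + y j t) ^ (α - 1) ≤ (μ * (X j / ℓ j)) ^ (α - 1) :=
            Real.rpow_le_rpow (add_nonneg (hgnn (j : ℕ) t) (hy j t ht)) hb hα0
          have h3 := mul_le_mul_of_nonneg_right
            (mul_le_mul_of_nonneg_left h2 (by linarith : (0:ℝ) ≤ α)) (hy j t ht)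
          linarith
      · rw [hsucc j t, if_neg ht, if_neg ht]
        simp
    calc ∑ t : T, (g ((j : ℕ) + 1) t ^ α - g (j : ℕ) t ^ α)
        ≤ ∑ t : T, (if t ∈ Tj j then α * (μ * (X j / ℓ j)) ^ (α - 1) * y j t else 0) :=
          Finset.sum_le_sum fun t _ => hstep t
      _ = ∑ t ∈ Tj j, α * (μ * (X j / ℓ j)) ^ (α - 1) * y j t := by
          rw [Finset.sum_ite_mem]
          congr 1
          exact Finset.univ_inter _
      _ = B j := by simp only [hB]; rw [Finset.mul_sum]
  -- total right-part sum
  have hsum2 : ∑ t : T, (∑ j' ∈ univ.filter (fun j' : Fin n => t ∈ Tj j'), y j' t) ^ α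
        / μ ^ (α - 1)
      ≤ ∑ j : Fin n, B j / μ ^ (α - 1) := by
    have e1 : ∑ t : T, (∑ j' ∈ univ.filter (fun j' : Fin n => t ∈ Tj j'), y j' t) ^ α
          / μ ^ (α - 1)
        = (∑ j : Fin n, ∑ t : T, (g ((j : ℕ) + 1) t ^ α - g (j : ℕ) t ^ α)) / μ ^ (α - 1) := by
      rw [← Finset.sum_div]
      congr 1
      calc ∑ t : T, (∑ j' ∈ univ.filter (fun j' : Fin n => t ∈ Tj j'), y j' t) ^ α
          = ∑ t : T, ∑ k ∈ Finset.range n, (g (k + 1) t ^ α - g k t ^ α) := by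
            refine Finset.sum_congr rfl fun t _ => ?_
            rw [← hgn t, htel t]
        _ = ∑ k ∈ Finset.range n, ∑ t : T, (g (k + 1) t ^ α - g k t ^ α) :=
            Finset.sum_comm
        _ = ∑ j : Fin n, ∑ t : T, (g ((j : ℕ) + 1) t ^ α - g (j : ℕ) t ^ α) :=
            (Fin.sum_univ_eq_sum_range
              (fun k => ∑ t : T, (g (k + 1) t ^ α - g k t ^ α)) n).symm
    rw [e1, ← Finset.sum_div]
    gcongr with j _
    exact hjob j
  -- per-job combination
  have key : ∀ j : Fin n, X j ^ α / ℓ j ^ (α - 1) + B j / μ ^ (α - 1)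
      ≤ (X j + ∑ t ∈ Tj j, y j t) ^ α / ℓ j ^ (α - 1) := by
    intro j
    have hS : 0 ≤ ∑ t ∈ Tj j, y j t := Finset.sum_nonneg fun t ht => hy j t ht
    have hq : 0 ≤ X j / ℓ j := div_nonneg (hX j) (hℓ j).le
    have hLp : 0 < ℓ j ^ (α - 1) := Real.rpow_pos_of_pos (hℓ j) _
    have e1 : B j / μ ^ (α - 1)
        = α * (X j ^ (α - 1) / ℓ j ^ (α - 1)) * (∑ t ∈ Tj j, y j t) := by
      simp only [hB]
      rw [Real.mul_rpow hμ.le hq, Real.div_rpow (hX j) (hℓ j).le]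
      field_simp
    rw [e1]
    have e2 : X j ^ α / ℓ j ^ (α - 1)
          + α * (X j ^ (α - 1) / ℓ j ^ (α - 1)) * (∑ t ∈ Tj j, y j t)
        = (X j ^ α + α * X j ^ (α - 1) * (∑ t ∈ Tj j, y j t)) / ℓ j ^ (α - 1) := by
      field_simp
    rw [e2]
    gcongr
    exact rpow_lower hα1 (hX j) hS
  calc ∑ j : Fin n, X j ^ α / ℓ j ^ (α - 1)
        + ∑ t : T, (∑ j' ∈ univ.filter (fun j' : Fin n => t ∈ Tj j'), y j' t) ^ α
          / μ ^ (α - 1)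
      ≤ ∑ j : Fin n, X j ^ α / ℓ j ^ (α - 1) + ∑ j : Fin n, B j / μ ^ (α - 1) :=
        add_le_add_right hsum2 _
    _ = ∑ j : Fin n, (X j ^ α / ℓ j ^ (α - 1) + B j / μ ^ (α - 1)) :=
        Finset.sum_add_distrib.symm
    _ ≤ ∑ j : Fin n, (X j + ∑ t ∈ Tj j, y j t) ^ α / ℓ j ^ (α - 1) :=
        Finset.sum_le_sum fun j _ => key j
end

section
/- Aggregate robustness inequality (Lemma 'general-robustness', combinatorial core): Let α > 1 and μ > 0 be reals, n ≥ 1, and T a finite set. For each j ∈ {1, …, n} let T_j ⊆ T be nonempty, let δ_j > 0 and ℓ_j > 0 be reals, and let y_j : T_j → ℝ with 0 ≤ y_j(t) ≤ δ_j for all t ∈ T_j; set X_j = Σ_{t ∈ T_j} (δ_j − y_j(t)), and for t ∈ T set V(t) = Σ_{j with t ∈ T_j} y_j(t). Assume that for every j and every t ∈ T_j with y_j(t) < δ_j one has X_j/ℓ_j ≤ V(t)/μ. Then Σ_{j=1}^n X_j^α/ℓ_j^(α−1) + Σ_{t ∈ T} V(t)^α/μ^(α−1) ≤ Σ_{t ∈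 T} (Σ_{j with t ∈ T_j} δ_j)^α/μ^(α−1). -/
open Finset

/-- Bernoulli-type inequality: for `0 ≤ a`, `0 ≤ b`, `1 < α`,
`a^α + α * a^(α-1) * b ≤ (a+b)^α`. -/
lemma bern_aux {α : ℝ} (hα : 1 < α) {a b : ℝ} (ha : 0 ≤ a) (hb : 0 ≤ b) :
    a ^ α + α * a ^ (α - 1) * b ≤ (a + b) ^ α := by
  rcases eq_or_lt_of_le ha with h | h
  · subst h
    rw [Real.zero_rpow (by linarith), Real.zero_rpow (by linarith)]
    simpa using Real.rpow_nonneg hb α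
  · have hba : -1 ≤ b / a := le_trans (by norm_num) (div_nonneg hb h.le)
    have key := one_add_mul_self_le_rpow_one_add hba hα.le
    have h1 : a ^ α * (1 + α * (b / a)) ≤ a ^ α * (1 + b / a) ^ α :=
      mul_le_mul_of_nonneg_left key (Real.rpow_nonneg h.le α)
    have h2 : a ^ α * (1 + b / a) ^ α = (a + b) ^ α := by
      rw [← Real.mul_rpow h.le (by positivity)]
      congr 1
      field_simp
    have h3 : a ^ α * (1 + α * (b / a)) = a ^ α + α * a ^ (α - 1) * b := by
      have : a ^ (α - 1) = a ^ α / a := by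
        rw [Real.rpow_sub h, Real.rpow_one]
      rw [this]
      field_simp
    linarith [h1, h2 ▸ h1, h3]

/-- **Aggregate robustness inequality** (combinatorial core of Lemma
`general-robustness`): job `j` has nonempty slot set `Tj j`, density `δ j`, reserved
left-part length `ℓ j` and right-part volumes `0 ≤ y j t ≤ δ j`; its left-part volume
is `X j = ∑_{t ∈ Tj j} (δ j - y j t)` and `V t = ∑_{j : t ∈ Tj j} y j t` is the total
right-part volume of slot `t`.  If `X j / ℓ j ≤ V t / μ` whenever `y j t < δ j`, then
`∑ j, (X j)^α/(ℓ j)^(α-1) + ∑ t, (V t)^α/μ^(α-1) ≤ ∑ t, (∑_{j : t ∈ Tj j} δ j)^α/μ^(α-1)`. -/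
theorem aggregate_robustness (α μ : ℝ) (hα : 1 < α) (hμ : 0 < μ)
    (n : ℕ) (hn : 1 ≤ n) {T : Type*} [Fintype T] [DecidableEq T]
    (Tj : Fin n → Finset T) (hTj : ∀ j, (Tj j).Nonempty)
    (δ ℓ : Fin n → ℝ) (hδ : ∀ j, 0 < δ j) (hℓ : ∀ j, 0 < ℓ j)
    (y : Fin n → T → ℝ) (hy : ∀ j, ∀ t ∈ Tj j, 0 ≤ y j t ∧ y j t ≤ δ j)
    (hmain : ∀ j, ∀ t ∈ Tj j, y j t < δ j →
      (∑ t' ∈ Tj j, (δ j - y j t')) / ℓ j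
        ≤ (∑ j' ∈ univ.filter (fun j' : Fin n => t ∈ Tj j'), y j' t) / μ) :
    ∑ j : Fin n, (∑ t' ∈ Tj j, (δ j - y j t')) ^ α / ℓ j ^ (α - 1)
      + ∑ t : T, (∑ j' ∈ univ.filter (fun j' : Fin n => t ∈ Tj j'), y j' t) ^ α / μ ^ (α - 1)
      ≤ ∑ t : T, (∑ j' ∈ univ.filter (fun j' : Fin n => t ∈ Tj j'), δ j') ^ α / μ ^ (α - 1) := by
  set X : Fin n → ℝ := fun j => ∑ t' ∈ Tj j, (δ j - y j t') with hX
  set V : T → ℝ := fun t => ∑ j' ∈ univ.filter (fun j' : Fin n => t ∈ Tj j'), y j' t with hV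
  set D : T → ℝ := fun t => ∑ j' ∈ univ.filter (fun j' : Fin n => t ∈ Tj j'), δ j' with hD
  have hXnn : ∀ j, 0 ≤ X j := fun j =>
    Finset.sum_nonneg fun t ht => sub_nonneg.2 (hy j t ht).2
  have hVnn : ∀ t, 0 ≤ V t := fun t =>
    Finset.sum_nonneg fun j hj => (hy j t (by simpa using (Finset.mem_filter.1 hj).2)).1
  have hDV : ∀ t, V t + (D t - V t) = D t := fun t => by ring
  have hDVnn : ∀ t, 0 ≤ D t - V t := fun t => by
    simp only [hV, hD, ← Finset.sum_sub_distrib]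
    exact Finset.sum_nonneg fun j hj =>
      sub_nonneg.2 (hy j t (by simpa using (Finset.mem_filter.1 hj).2)).2
  -- Step 1: pointwise Bernoulli bound
  have step1 : ∀ t, V t ^ α + α * V t ^ (α - 1) * (D t - V t) ≤ D t ^ α := by
    intro t
    have := bern_aux hα (hVnn t) (hDVnn t)
    rwa [hDV t] at this
  -- Step 2: termwise comparison per job
  have step2 : ∀ j, X j ^ α / ℓ j ^ (α - 1)
      ≤ ∑ t ∈ Tj j, (V t / μ) ^ (α - 1) * (δ j - y j t) := by
    intro j
    have key : ∀ t ∈ Tj j,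
        (X j / ℓ j) ^ (α - 1) * (δ j - y j t) ≤ (V t / μ) ^ (α - 1) * (δ j - y j t) := by
      intro t ht
      rcases lt_or_eq_of_le (hy j t ht).2 with hlt | heq
      · refine mul_le_mul_of_nonneg_right ?_ (by linarith)
        exact Real.rpow_le_rpow (div_nonneg (hXnn j) (hℓ j).le) (hmain j t ht hlt) (by linarith)
      · rw [heq]; simp
    calc X j ^ α / ℓ j ^ (α - 1)
        = (X j / ℓ j) ^ (α - 1) * X j := by
          rw [Real.div_rpow (hXnn j) (hℓ j).le]
          rcases eq_or_lt_of_le (hXnn j) with h0 | h0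
          · rw [← h0, Real.zero_rpow (by linarith), Real.zero_rpow (by linarith)]
            simp
          · rw [div_mul_eq_mul_div, ← Real.rpow_add_one (ne_of_gt h0), sub_add_cancel]
      _ = ∑ t ∈ Tj j, (X j / ℓ j) ^ (α - 1) * (δ j - y j t) := by
          rw [hX, Finset.mul_sum]
      _ ≤ ∑ t ∈ Tj j, (V t / μ) ^ (α - 1) * (δ j - y j t) := Finset.sum_le_sum key
  -- Step 3: swap sums
  have swap : ∑ t : T, ∑ j ∈ univ.filter (fun j : Fin n => t ∈ Tj j),
        (V t / μ) ^ (α - 1) * (δ j - y j t)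
      = ∑ j : Fin n, ∑ t ∈ Tj j, (V t / μ) ^ (α - 1) * (δ j - y j t) := by
    apply Finset.sum_comm'
    intro t j
    simp
  -- Combine
  have hS : ∀ t, (V t / μ) ^ (α - 1) * (D t - V t)
      = ∑ j ∈ univ.filter (fun j : Fin n => t ∈ Tj j),
        (V t / μ) ^ (α - 1) * (δ j - y j t) := by
    intro t
    rw [← Finset.mul_sum]
    congr 1
    simp only [hV, hD, ← Finset.sum_sub_distrib]
  have Snn : ∀ t, 0 ≤ (V t / μ) ^ (α - 1) * (D t - V t) := fun t =>
    mul_nonneg (Real.rpow_nonneg (div_nonneg (hVnn t) hμ.le) _) (hDVnn t)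
  have main : ∑ j : Fin n, X j ^ α / ℓ j ^ (α - 1)
      ≤ ∑ t : T, (V t / μ) ^ (α - 1) * (D t - V t) := by
    calc ∑ j : Fin n, X j ^ α / ℓ j ^ (α - 1)
        ≤ ∑ j : Fin n, ∑ t ∈ Tj j, (V t / μ) ^ (α - 1) * (δ j - y j t) :=
          Finset.sum_le_sum fun j _ => step2 j
      _ = ∑ t : T, ∑ j ∈ univ.filter (fun j : Fin n => t ∈ Tj j),
            (V t / μ) ^ (α - 1) * (δ j - y j t) := swap.symm
      _ = ∑ t : T, (V t / μ) ^ (α - 1) * (D t - V t) := by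
          exact Finset.sum_congr rfl fun t _ => (hS t).symm
  have final : ∀ t, V t ^ α / μ ^ (α - 1) + (V t / μ) ^ (α - 1) * (D t - V t)
      ≤ D t ^ α / μ ^ (α - 1) := by
    intro t
    have h1 := step1 t
    have hμα : 0 < μ ^ (α - 1) := Real.rpow_pos_of_pos hμ _
    have h2 : (V t / μ) ^ (α - 1) = V t ^ (α - 1) / μ ^ (α - 1) :=
      Real.div_rpow (hVnn t) hμ.le (α - 1)
    have h3 : V t ^ α + V t ^ (α - 1) * (D t - V t) ≤ D t ^ α := by
      nlinarith [mul_nonneg (Real.rpow_nonneg (hVnn t) (α - 1)) (hDVnn t)]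
    rw [h2, div_mul_eq_mul_div, ← add_div]
    exact (div_le_div_iff_of_pos_right hμα).2 h3
  calc ∑ j : Fin n, X j ^ α / ℓ j ^ (α - 1) + ∑ t : T, V t ^ α / μ ^ (α - 1)
      ≤ ∑ t : T, (V t / μ) ^ (α - 1) * (D t - V t) + ∑ t : T, V t ^ α / μ ^ (α - 1) := by
        linarith [main]
    _ = ∑ t : T, (V t ^ α / μ ^ (α - 1) + (V t / μ) ^ (α - 1) * (D t - V t)) := by
        rw [Finset.sum_add_distrib]; ring
    _ ≤ ∑ t : T, D t ^ α / μ ^ (α - 1) := Finset.sum_le_sum fun t _ => final t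
end
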